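/- arXiv:2407.00403 — 2 statements merged into one kernel-verified Lean document; each statement's English description precedes it below -/
import Mathlib

section
/- Let l ≥ 1 (q = p^l), let s = (s_1,…,s_d) be an index, and let u = (u_1,…,u_d) ∈ Kbar[t]^d. If ‖u_k‖∞ < |θ|∞^{s_k·q/(q−1)} for every 1 ≤ k ≤ d, then the series L_{l,u,s} converges in the Tate algebra T; that is, expanding each term of the defining series as a power series on the closed unit disk and summing, one obtains a power series Σ_{i≥0} a_i t^i with a_i ∈ C∞ and |a_i|∞ → 0. -/
/-!
Shared setup.  The field `C` plays the role of `ℂ_∞`: the completion of a fixed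
algebraic closure of `𝔽_p((1/θ))`, an algebraically closed, perfect, complete
nonarchimedean valued field of characteristic `p`.  It is axiomatized by its
characterizing properties: an algebraically closed perfect field `C` of
characteristic `p` together with a nonarchimedean absolute value `abv` for which `C`
is complete and with a distinguished element `θ` satisfying `abv θ = p` (the latter
hypotheses appear explicitly in the theorems below).
-/

namespace Carlitz

noncomputable section

open Filter Polynomial

variable (C : Type) [Field C] (p : ℕ) [Fact p.Prime] [CharP C p]

/-- The finite subfield `𝔽_{p^l}` of `C`: the fixed points of the `l`-th iterate of
the Frobenius. -/
def Fq (l : ℕ) : Subfield C where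
  carrier := {x : C | x ^ p ^ l = x}
  mul_mem' := by
    intro a b ha hb
    simp only [Set.mem_setOf_eq] at *
    rw [mul_pow, ha, hb]
  one_mem' := by simp
  add_mem' := by
    intro a b ha hb
    simp only [Set.mem_setOf_eq] at *
    have h := map_add (iterateFrobenius C p l) a b
    simp only [iterateFrobenius_def] at h
    rw [h, ha, hb]
  zero_mem' := by
    simp only [Set.mem_setOf_eq]
    exact zero_pow (pow_pos (Nat.Prime.pos Fact.out) l).ne'
  neg_mem' := by
    intro a ha
    simp only [Set.mem_setOf_eq] at *
    have h := map_neg (iterateFrobenius C p l) a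
    simp only [iterateFrobenius_def] at h
    rw [h, ha]
  inv_mem' := by
    intro a ha
    simp only [Set.mem_setOf_eq] at *
    rw [inv_pow, ha]

variable {C}

section Abv

variable (abv : AbsoluteValue C ℝ)

/-- `abv` is nonarchimedean. -/
def IsNonarch : Prop := ∀ x y : C, abv (x + y) ≤ max (abv x) (abv y)

/-- Convergence of a sequence with respect to `abv`. -/
def TendstoAbv (f : ℕ → C) (x : C) : Prop :=
  ∀ ε : ℝ, 0 < ε → ∃ N : ℕ, ∀ n, N ≤ n → abv (f n - x) < ε

/-- Unconditional summability of a family with respect to `abv`, with sum `S`. -/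
def HasAbvSum {ι : Type} (f : ι → C) (S : C) : Prop :=
  ∀ ε : ℝ, 0 < ε → ∃ F : Finset ι, ∀ G : Finset ι, F ⊆ G → abv ((∑ i ∈ G, f i) - S) < ε

/-- `C` is complete with respect to `abv`. -/
def AbvComplete : Prop :=
  ∀ f : ℕ → C, (∀ ε : ℝ, 0 < ε → ∃ N : ℕ, ∀ m, N ≤ m → ∀ n, N ≤ n → abv (f m - f n) < ε) →
    ∃ x : C, TendstoAbv abv f x

end Abv

/-- The rational function field `K = 𝔽_p(θ)`: the subfield of `C` generated by `θ`
(it automatically contains the prime field `𝔽_p`). -/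
def Kzero (θ : C) : Subfield C := Subfield.closure {θ}

/-- `K̄`: the algebraic closure of `K = 𝔽_p(θ)` inside `C`, i.e. the subfield of all
elements of `C` that are algebraic over `K`. -/
def Kbar (θ : C) : Subfield C :=
  Subfield.closure {x : C | IsAlgebraic (Kzero θ) x}

/-- The transcendence degree, over a subfield `K` of `C`, of the subfield of `C`
generated by `K` and a set `S`: the supremum of the cardinalities of its finite
subsets that are algebraically independent over `K`. -/
def trdegOver (K : Subfield C) (S : Set C) : ℕ :=
  sSup {n : ℕ | ∃ T : Finset C, ↑T ⊆ (Subfield.closure ((K : Set C) ∪ S) : Set C) ∧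
    T.card = n ∧ AlgebraicIndependent K (fun x : (T : Set C) => (x : C))}

/-- An index `(s_1, …, s_d)`: a nonempty finite tuple of positive integers, encoded
as a (nonempty) list. -/
abbrev Index : Type := List ℕ+

/-- `Sub`-closedness of a finite set of indices: membership is closed under passing to
nonempty contiguous subtuples (`Sub(𝐬) = {(s_i, …, s_j) | 1 ≤ i ≤ j ≤ d}`). -/
def SubClosed (I : Finset Index) : Prop :=
  ∀ s ∈ I, ∀ t : Index, t <:+: s → t ≠ [] → t ∈ I

/-- One term `a_1^{-s_1} ⋯ a_d^{-s_d}` of a multiple zeta value, the monic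
polynomials `a_i ∈ 𝔽_{p^l}[θ]` being evaluated at `θ ∈ C`. -/
def mzvTerm (θ : C) (l : ℕ) (s : Index) (a : Fin s.length → Polynomial (Fq C p l)) : C :=
  ∏ i, (Polynomial.eval₂ (Fq C p l).subtype θ (a i) ^ (s.get i : ℕ))⁻¹

/-- The tuples `(a_1, …, a_d)` of monic polynomials in `𝔽_{p^l}[θ]` with
`deg a_1 > ⋯ > deg a_d ≥ 0`. -/
def MZVTuples (l d : ℕ) : Type :=
  {a : Fin d → Polynomial (Fq C p l) // (∀ i, (a i).Monic) ∧
    StrictAnti fun i => (a i).natDegree}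

/-- `z` is the multiple zeta value `ζ_l(s_1, …, s_d)`: the (unconditional) sum of the
family of terms `a_1^{-s_1} ⋯ a_d^{-s_d}` over all tuples of monic polynomials in
`𝔽_{p^l}[θ]` with strictly decreasing degrees. -/
def IsMZV (abv : AbsoluteValue C ℝ) (θ : C) (l : ℕ) (s : Index) (z : C) : Prop :=
  HasAbvSum abv (fun a : MZVTuples (C := C) p l s.length => mzvTerm p θ l s a.1) z

/-- The partial products of the infinite product defining `Ω_l`, evaluated at `t = θ`;
`β` is the fixed `(q-1)`-st root of `-θ`, so that `(-θ)^{-q/(q-1)} = (β^q)⁻¹`. -/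
def omegaAtThetaPartial (θ : C) (l : ℕ) (β : C) (N : ℕ) : C :=
  (β ^ p ^ l)⁻¹ * ∏ i ∈ Finset.range N, (1 - θ * (θ ^ (p ^ l) ^ (i + 1))⁻¹)

/-- `w` is the value `Ω_l(θ)`: the limit of the partial products of the infinite
product defining `Ω_l`, evaluated at `t = θ`. -/
def IsOmegaAtTheta (abv : AbsoluteValue C ℝ) (θ : C) (l : ℕ) (β : C) (w : C) : Prop :=
  TendstoAbv abv (omegaAtThetaPartial p θ l β) w

/-- `π` is the Carlitz period `π̃_l = Ω_l(θ)⁻¹` (for a choice of `(q-1)`-st root `β`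
of `-θ`). -/
def IsCarlitzPeriod (abv : AbsoluteValue C ℝ) (θ : C) (l : ℕ) (π : C) : Prop :=
  ∃ β w : C, β ^ (p ^ l - 1) = -θ ∧ IsOmegaAtTheta p abv θ l β w ∧ w ≠ 0 ∧ π = w⁻¹

/-- Membership in the Laurent series subfield `𝔽_{p^l}((1/θ)) ⊆ C`: `x` is a
convergent sum `∑_{i ≤ N} c_i θ^i` with coefficients `c_i ∈ 𝔽_{p^l}`. -/
def InLaurentField (abv : AbsoluteValue C ℝ) (θ : C) (l : ℕ) (x : C) : Prop :=
  ∃ (N : ℤ) (c : ℤ → C), (∀ i, c i ∈ Fq C p l) ∧ (∀ i : ℤ, N < i → c i = 0) ∧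
    HasAbvSum abv (fun i : ℤ => c i * θ ^ i) x

section Twist

variable [PerfectRing C p]

/-- The `n`-fold twist on elements of `C`: `x ↦ x^{p^n}` for `n ∈ ℤ` (using
perfectness for negative `n`). -/
def twistHom (n : ℤ) : C →+* C := ((frobeniusEquiv C p ^ n : C ≃+* C) : C →+* C)

/-- The `n`-fold twist `f ↦ f^{(n)}` on power series:
`(∑ a_i t^i)^{(n)} = ∑ a_i^{p^n} t^i`. -/
def twistPS (n : ℤ) : PowerSeries C →+* PowerSeries C := PowerSeries.map (twistHom p n)

/-- The `n`-fold twist on polynomials. -/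
def twistPoly (n : ℤ) : Polynomial C →+* Polynomial C := Polynomial.mapRingHom (twistHom p n)

/-- The `n`-fold twist on formal Laurent series. -/
def twistLS (n : ℤ) (f : LaurentSeries C) : LaurentSeries C := f.map (twistHom p n)

end Twist

/-- The `N`-th partial product of the infinite product defining `Ω_l`, as a power
series; `β` is the fixed `(q-1)`-st root of `-θ`, so `(-θ)^{-q/(q-1)} = (β^q)⁻¹`. -/
def omegaPartial (θ : C) (l : ℕ) (β : C) (N : ℕ) : PowerSeries C :=
  PowerSeries.C (β ^ p ^ l)⁻¹ *
    ∏ i ∈ Finset.range N, (1 - PowerSeries.C (θ ^ (p ^ l) ^ (i + 1))⁻¹ * PowerSeries.X)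

/-- `Ω` is the power series `Ω_l(t) ∈ C[[t]]`: the infinite product converges
coefficientwise to `Ω`. -/
def IsOmega (abv : AbsoluteValue C ℝ) (θ : C) (l : ℕ) (β : C) (Ω : PowerSeries C) : Prop :=
  ∀ n : ℕ, ∀ ε : ℝ, 0 < ε → ∃ M : ℕ, ∀ N, M ≤ N →
    abv (PowerSeries.coeff n (omegaPartial p θ l β N) - PowerSeries.coeff n Ω) < ε

/-- `x` is the value `f(θ)` of a power series `f` at `t = θ` (a convergent sum in `C`). -/
def EvalAtTheta (abv : AbsoluteValue C ℝ) (θ : C) (f : PowerSeries C) (x : C) : Prop :=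
  HasAbvSum abv (fun n : ℕ => PowerSeries.coeff n f * θ ^ n) x

/-- Membership in the Tate algebra `𝕋 ⊆ C[[t]]`: the coefficients tend to `0`. -/
def InTate (abv : AbsoluteValue C ℝ) (f : PowerSeries C) : Prop :=
  Tendsto (fun n : ℕ => abv (PowerSeries.coeff n f)) atTop (nhds 0)

/-- Summability of a family of power series with respect to the Gauss sup-norm of the
Tate algebra, with sum `S`. -/
def HasSumTate (abv : AbsoluteValue C ℝ) {ι : Type} (f : ι → PowerSeries C)
    (S : PowerSeries C) : Prop :=
  ∀ ε : ℝ, 0 < ε → ∃ F : Finset ι, ∀ G : Finset ι, F ⊆ G → ∀ n : ℕ,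
    abv (PowerSeries.coeff n ((∑ i ∈ G, f i) - S)) < ε

/-- The subfield `L₂` is spanned over the subfield `L₁` by finitely many elements,
i.e. `L₂` is a finite extension of `L₁`. -/
def SpansFinitelyOver (L₁ L₂ : Subfield C) : Prop :=
  ∃ s : Finset C, ↑s ⊆ (L₂ : Set C) ∧
    ∀ x ∈ L₂, ∃ c : C → C, (∀ y, c y ∈ L₁) ∧ x = ∑ y ∈ s, c y * y

/-- The subfield `K_∞ = 𝔽_p((1/θ))` of `C`. -/
def Kinfty (abv : AbsoluteValue C ℝ) (θ : C) : Subfield C :=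
  Subfield.closure {x : C | InLaurentField p abv θ 1 x}

/-- A power series `∑ a_i t^i ∈ C[[t]]` is entire: `|a_i|^{1/i} → 0` and the
coefficients generate a finite field extension of `𝔽_p((1/θ))`. -/
def IsEntire (abv : AbsoluteValue C ℝ) (θ : C) (f : PowerSeries C) : Prop :=
  Tendsto (fun n : ℕ => abv (PowerSeries.coeff n f) ^ ((1 : ℝ) / n)) atTop (nhds 0) ∧
    SpansFinitelyOver (Kinfty p abv θ)
      (Subfield.closure ({x : C | InLaurentField p abv θ 1 x} ∪
        Set.range fun n : ℕ => PowerSeries.coeff n f))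

/-- Strictly decreasing tuples `i_1 > i_2 > ⋯ > i_d ≥ 0` of natural numbers. -/
def DecTuples (d : ℕ) : Type := {i : Fin d → ℕ // StrictAnti i}

section Polylog

variable [PerfectRing C p]

/-- One term of the `t`-motivic Carlitz multiple polylogarithm `L_{l,u,s}`, as a
power series (the factors `1/(t - θ^{q^k})` are expanded as power series on the
closed unit disk, i.e. inverted in `C[[t]]`). -/
def polylogTerm (θ : C) (l : ℕ) {d : ℕ} (s : Fin d → ℕ+) (u : Fin d → Polynomial C)
    (i : DecTuples d) : PowerSeries C :=
  (∏ k, (((u k).map (iterateFrobenius C p (i.1 k * l)) : Polynomial C) : PowerSeries C)) *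
    ((∏ k, (∏ j ∈ Finset.Icc 1 (i.1 k),
      (PowerSeries.X - PowerSeries.C (θ ^ (p ^ l) ^ j))) ^ (s k : ℕ)))⁻¹

/-- `Lser` is the `t`-motivic Carlitz multiple polylogarithm `L_{l,u,s}(t)`: the sum,
in the Tate algebra, of the family of its terms. -/
def IsPolylog (abv : AbsoluteValue C ℝ) (θ : C) (l : ℕ) {d : ℕ} (s : Fin d → ℕ+)
    (u : Fin d → Polynomial C) (Lser : PowerSeries C) : Prop :=
  HasSumTate abv (polylogTerm p θ l s u) Lser

/-- One term of the Carlitz multiple polylogarithm series, evaluated at `t = θ`. -/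
def polylogTermAtTheta (θ : C) (l : ℕ) {d : ℕ} (s : Fin d → ℕ+) (u : Fin d → Polynomial C)
    (i : DecTuples d) : C :=
  (∏ k, Polynomial.eval θ ((u k).map (iterateFrobenius C p (i.1 k * l)))) *
    ((∏ k, (∏ j ∈ Finset.Icc 1 (i.1 k), (θ - θ ^ (p ^ l) ^ j)) ^ (s k : ℕ)))⁻¹

end Polylog

/-- The Gauss-norm bound `‖u‖_∞ < |θ|_∞^{s·q/(q-1)}` (with `q = p^l`): every
coefficient of `u` has absolute value `< abv θ ^ (s·q/(q-1))`. -/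
def GaussBound (abv : AbsoluteValue C ℝ) (θ : C) (l : ℕ) (sk : ℕ) (u : Polynomial C) : Prop :=
  ∀ i : ℕ, abv (u.coeff i) < abv θ ^ (((sk : ℝ) * (p : ℝ) ^ l) / ((p : ℝ) ^ l - 1))

/-- All coefficients of the polynomial `u` lie in the subfield `K`. -/
def CoeffsIn (K : Subfield C) (u : Polynomial C) : Prop := ∀ i : ℕ, u.coeff i ∈ K

variable (C)

/-- For `l ≥ 1` the subfield `𝔽_{p^l} ⊆ C` is finite (it consists of roots of
`X^{p^l} - X`). -/
def fqFintype (l : ℕ) (hl : 0 < l) : Fintype (Fq C p l) := by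
  have hp1 : 1 < p ^ l := Nat.one_lt_pow hl.ne' (Nat.Prime.one_lt Fact.out)
  have hne : (Polynomial.X ^ p ^ l - Polynomial.X : Polynomial C) ≠ 0 := by
    intro h
    have h2 : (Polynomial.X ^ p ^ l : Polynomial C) = Polynomial.X := by
      rwa [sub_eq_zero] at h
    have h3 := congrArg Polynomial.natDegree h2
    rw [Polynomial.natDegree_X_pow, Polynomial.natDegree_X] at h3
    omega
  have hfin : ({x : C | x ^ p ^ l = x}).Finite := by
    refine (Polynomial.finite_setOf_isRoot hne).subset ?_
    intro x hx
    simp only [Set.mem_setOf_eq, Polynomial.IsRoot, Polynomial.eval_sub,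
      Polynomial.eval_pow, Polynomial.eval_X] at *
    rw [hx, sub_self]
  have hfin2 : ((Fq C p l : Set C)).Finite := hfin
  exact hfin2.fintype

/-- `D_i ∈ 𝔽_q[θ]`: the product of all monic polynomials of degree `i` over
`𝔽_q = 𝔽_{p^l}`, written as the product over all choices of the `i` lower
coefficients.  The indeterminate of `Polynomial (Fq C p l)` plays the role of `θ`. -/
def Dpoly (l : ℕ) (hl : 0 < l) (i : ℕ) : Polynomial (Fq C p l) :=
  letI := fqFintype C p l hl
  ∏ c : Fin i → Fq C p l,
    (Polynomial.X ^ i + ∑ j : Fin i, Polynomial.C (c j) * Polynomial.X ^ (j : ℕ))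

/-- The Carlitz factorial `Γ_{m+1} = ∏_i D_i^{m_{(i)}} ∈ 𝔽_q[θ]`, where
`m = ∑_i m_{(i)} q^i` is the `q`-adic expansion of `m`. -/
def gammaFact (l : ℕ) (hl : 0 < l) (m : ℕ) : Polynomial (Fq C p l) :=
  ∏ i ∈ Finset.range ((Nat.digits (p ^ l) m).length),
    Dpoly C p l hl i ^ ((Nat.digits (p ^ l) m).getD i 0)

/-- The ring `𝔽_q[θ][t]`: polynomials in `t` (the outer variable) over `𝔽_q[θ]`
(inner variable `θ`). -/
abbrev ATRing (l : ℕ) : Type := Polynomial (Polynomial (Fq C p l))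

/-- The fraction field `𝔽_q(θ, t)`. -/
abbrev ATField (l : ℕ) : Type := FractionRing (ATRing C p l)

/-- The coefficient `∏_{j=1}^{i}(t^{q^i} - θ^{q^j}) / ∏_{j=0}^{i-1}(t^{q^i} - t^{q^j})`
of `x^{q^i}` in the Anderson–Thakur generating series. -/
def atG (l : ℕ) (i : ℕ) : ATField C p l :=
  algebraMap (ATRing C p l) (ATField C p l)
      (∏ j ∈ Finset.Icc 1 i,
        (Polynomial.X ^ (p ^ l) ^ i - Polynomial.C Polynomial.X ^ (p ^ l) ^ j)) /
    algebraMap (ATRing C p l) (ATField C p l)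
      (∏ j ∈ Finset.range i, (Polynomial.X ^ (p ^ l) ^ i - Polynomial.X ^ (p ^ l) ^ j))

open scoped Classical in
/-- The series `1 - ∑_{i ≥ 0} [∏_{j=1}^{i}(t^{q^i} - θ^{q^j}) / ∏_{j=0}^{i-1}(t^{q^i} - t^{q^j})] x^{q^i}`,
a power series in `x` over `𝔽_q(θ, t)`. -/
def atBase (l : ℕ) : PowerSeries (ATField C p l) :=
  PowerSeries.mk fun k =>
    if k = 0 then 1
    else if h : ∃ i : ℕ, k = (p ^ l) ^ i then -(atG C p l (Nat.find h)) else 0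

/-- The Carlitz factorial `Γ_{m+1}|_{θ = t}`, i.e. with `θ` replaced by `t`, as an
element of `𝔽_q[θ][t]`. -/
def gammaAtT (l : ℕ) (hl : 0 < l) (m : ℕ) : ATRing C p l :=
  Polynomial.eval₂ ((Polynomial.C).comp (Polynomial.C)) Polynomial.X (gammaFact C p l hl m)

/-- `H : ℕ → 𝔽_q[θ][t]` is the family of Anderson–Thakur polynomials `(H_{l,s})_{s≥0}`:
it satisfies the generating identity
`(1 - ∑_{i≥0} [⋯] x^{q^i})⁻¹ = ∑_{s≥0} (H_s(t) / Γ_{s+1}|_{θ=t}) x^s`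
of power series in `x` over `𝔽_q(θ, t)`. -/
def IsATFamily (l : ℕ) (hl : 0 < l) (H : ℕ → ATRing C p l) : Prop :=
  (atBase C p l)⁻¹ =
    PowerSeries.mk fun s =>
      algebraMap (ATRing C p l) (ATField C p l) (H s) /
        algebraMap (ATRing C p l) (ATField C p l) (gammaAtT C p l hl s)

/-- The image in `C[t]` of `g(θ, t) ∈ 𝔽_q[θ][t]`, evaluating the variable `θ` at the
distinguished element `θ ∈ C`. -/
def toPolyC (θ : C) (l : ℕ) (g : ATRing C p l) : Polynomial C :=
  g.map (Polynomial.eval₂RingHom (Fq C p l).subtype θ)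

variable {C}

/-- The contiguous subtuple `(s_k, s_{k+1}, …, s_{j-1})` (0-based) of a tuple `s` of
length `d`, for `j ≤ d`. -/
def subTuple {α : Type} {d : ℕ} (s : Fin d → α) (k j : ℕ) (hj : j ≤ d) :
    Fin (j - k) → α :=
  fun m => s ⟨k + (m : ℕ), by have h := m.isLt; omega⟩

/-- The weight `s_k + s_{k+1} + ⋯ + s_{d-1}` (0-based) of the tail of an index. -/
def wtFrom {d : ℕ} (s : Fin d → ℕ+) (k : ℕ) : ℕ :=
  ∑ m : Fin d, if k ≤ (m : ℕ) then (s m : ℕ) else 0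

end

end Carlitz

namespace Carlitz

noncomputable section

open Filter Polynomial

/-! ### Auxiliary lemmas for the proof of `polylog_mem_tate` -/

section Aux

variable {C : Type} [Field C] (abv : AbsoluteValue C ℝ)

/-- Nonarchimedean bound for finite sums. -/
lemma abv_sum_le (hna : IsNonarch abv) {ι : Type} (F : Finset ι) (f : ι → C) {M : ℝ}
    (hM : 0 ≤ M) (h : ∀ i ∈ F, abv (f i) ≤ M) : abv (∑ i ∈ F, f i) ≤ M := by
  classical
  induction F using Finset.induction_on with
  | empty => simpa using hM
  | @insert a F ha ih =>
    rw [Finset.sum_insert ha]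
    refine le_trans (hna _ _) (max_le (h a (Finset.mem_insert_self a F)) ?_)
    exact ih fun i hi => h i (Finset.mem_insert_of_mem hi)

/-- A uniform bound on the coefficients of a power series. -/
def Bnd (f : PowerSeries C) (M : ℝ) : Prop := ∀ n, abv (PowerSeries.coeff n f) ≤ M

lemma bnd_mono {f : PowerSeries C} {M M' : ℝ} (h : Bnd abv f M) (hMM' : M ≤ M') :
    Bnd abv f M' := fun n => (h n).trans hMM'

lemma bnd_one : Bnd abv 1 1 := by
  intro n
  rw [PowerSeries.coeff_one]
  split_ifs <;> simp [abv.map_one, abv.map_zero]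

lemma bnd_mul (hna : IsNonarch abv) {f g : PowerSeries C} {M N : ℝ}
    (hf : Bnd abv f M) (hg : Bnd abv g N) (hM : 0 ≤ M) (hN : 0 ≤ N) :
    Bnd abv (f * g) (M * N) := by
  intro n
  rw [PowerSeries.coeff_mul]
  refine abv_sum_le abv hna _ _ (mul_nonneg hM hN) ?_
  intro pq _
  rw [map_mul]
  exact mul_le_mul (hf pq.1) (hg pq.2) (abv.nonneg _) hM

lemma bnd_prod (hna : IsNonarch abv) {ι : Type} (F : Finset ι) (f : ι → PowerSeries C)
    (M : ι → ℝ) (h : ∀ i ∈ F, Bnd abv (f i) (M i)) (hM : ∀ i ∈ F, 0 ≤ M i) :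
    Bnd abv (∏ i ∈ F, f i) (∏ i ∈ F, M i) := by
  classical
  induction F using Finset.induction_on with
  | empty => simpa using bnd_one abv
  | @insert a F ha ih =>
    rw [Finset.prod_insert ha, Finset.prod_insert ha]
    exact bnd_mul abv hna (h a (Finset.mem_insert_self a F))
      (ih (fun i hi => h i (Finset.mem_insert_of_mem hi))
        (fun i hi => hM i (Finset.mem_insert_of_mem hi)))
      (hM a (Finset.mem_insert_self a F))
      (Finset.prod_nonneg fun i hi => hM i (Finset.mem_insert_of_mem hi))

lemma bnd_pow (hna : IsNonarch abv) {f : PowerSeries C} {M : ℝ}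
    (hf : Bnd abv f M) (hM : 0 ≤ M) (n : ℕ) : Bnd abv (f ^ n) (M ^ n) := by
  have h1 : f ^ n = ∏ _i ∈ Finset.range n, f := by rw [Finset.prod_const, Finset.card_range]
  have h2 : M ^ n = ∏ _i ∈ Finset.range n, M := by rw [Finset.prod_const, Finset.card_range]
  rw [h1, h2]
  exact bnd_prod abv hna _ _ _ (fun i _ => hf) (fun i _ => hM)

/-- A power series with bounded coefficients tending to `0`. -/
def NullPS (f : PowerSeries C) : Prop :=
  (∃ M, 0 ≤ M ∧ Bnd abv f M) ∧
    Tendsto (fun n => abv (PowerSeries.coeff n f)) atTop (nhds 0)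

lemma null_of_eventually_zero {f : PowerSeries C} (N : ℕ)
    (h : ∀ n, N ≤ n → PowerSeries.coeff n f = 0) :
    Tendsto (fun n => abv (PowerSeries.coeff n f)) atTop (nhds 0) := by
  refine Tendsto.congr' ?_ tendsto_const_nhds
  filter_upwards [eventually_ge_atTop N] with n hn
  rw [h n hn, abv.map_zero]

lemma null_one : NullPS abv (1 : PowerSeries C) := by
  refine ⟨⟨1, zero_le_one, bnd_one abv⟩, null_of_eventually_zero abv 1 ?_⟩
  intro n hn
  rw [PowerSeries.coeff_one, if_neg (by omega)]

lemma null_poly (P : Polynomial C) : NullPS abv (P : PowerSeries C) := by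
  constructor
  · refine ⟨∑ m ∈ Finset.range (P.natDegree + 1), abv (P.coeff m),
      Finset.sum_nonneg fun m _ => abv.nonneg _, fun n => ?_⟩
    rw [Polynomial.coeff_coe]
    rcases le_or_gt n P.natDegree with h | h
    · exact Finset.single_le_sum (f := fun m => abv (P.coeff m))
        (fun m _ => abv.nonneg _) (Finset.mem_range.mpr (by omega))
    · rw [P.coeff_eq_zero_of_natDegree_lt h, abv.map_zero]
      exact Finset.sum_nonneg fun m _ => abv.nonneg _
  · refine null_of_eventually_zero abv (P.natDegree + 1) fun n hn => ?_
    rw [Polynomial.coeff_coe]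
    exact P.coeff_eq_zero_of_natDegree_lt (by omega)

lemma null_mul (hna : IsNonarch abv) {f g : PowerSeries C}
    (hf : NullPS abv f) (hg : NullPS abv g) : NullPS abv (f * g) := by
  obtain ⟨⟨M, hM0, hMb⟩, hft⟩ := hf
  obtain ⟨⟨N, hN0, hNb⟩, hgt⟩ := hg
  constructor
  · exact ⟨M * N, mul_nonneg hM0 hN0, bnd_mul abv hna hMb hNb hM0 hN0⟩
  · rw [Metric.tendsto_atTop] at hft hgt ⊢
    intro ε hε
    set K : ℝ := max M N + 1 with hK
    have hKpos : 0 < K := by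
      have : (0:ℝ) ≤ max M N := le_trans hM0 (le_max_left _ _)
      linarith
    have hMK : M ≤ K := le_trans (le_max_left _ _) (by linarith)
    have hNK : N ≤ K := le_trans (le_max_right _ _) (by linarith)
    have hδ : 0 < ε / (2 * K) := by positivity
    obtain ⟨N1, h1⟩ := hft _ hδ
    obtain ⟨N2, h2⟩ := hgt _ hδ
    refine ⟨N1 + N2 + 1, fun n hn => ?_⟩
    rw [Real.dist_eq, sub_zero, abs_of_nonneg (abv.nonneg _)]
    have hle : abv (PowerSeries.coeff n (f * g)) ≤ ε / 2 := by
      rw [PowerSeries.coeff_mul]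
      refine abv_sum_le abv hna _ _ (by positivity) ?_
      intro pq hpq
      rw [Finset.HasAntidiagonal.mem_antidiagonal] at hpq
      rw [map_mul]
      rcases (show N1 ≤ pq.1 ∨ N2 ≤ pq.2 by omega) with h | h
      · have ha := h1 pq.1 h
        rw [Real.dist_eq, sub_zero, abs_of_nonneg (abv.nonneg _)] at ha
        calc abv (PowerSeries.coeff pq.1 f) * abv (PowerSeries.coeff pq.2 g)
            ≤ (ε / (2 * K)) * K :=
              mul_le_mul ha.le ((hNb _).trans hNK) (abv.nonneg _) hδ.le
          _ = ε / 2 := by field_simp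
      · have hb := h2 pq.2 h
        rw [Real.dist_eq, sub_zero, abs_of_nonneg (abv.nonneg _)] at hb
        calc abv (PowerSeries.coeff pq.1 f) * abv (PowerSeries.coeff pq.2 g)
            ≤ K * (ε / (2 * K)) :=
              mul_le_mul ((hMb _).trans hMK) hb.le (abv.nonneg _) hKpos.le
          _ = ε / 2 := by field_simp
    linarith
    
lemma null_prod (hna : IsNonarch abv) {ι : Type} (F : Finset ι) (f : ι → PowerSeries C)
    (h : ∀ i ∈ F, NullPS abv (f i)) : NullPS abv (∏ i ∈ F, f i) := by
  classical
  induction F using Finset.induction_on with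
  | empty => simpa using null_one abv
  | @insert a F ha ih =>
    rw [Finset.prod_insert ha]
    exact null_mul abv hna (h a (Finset.mem_insert_self a F))
      (ih fun i hi => h i (Finset.mem_insert_of_mem hi))

lemma null_pow (hna : IsNonarch abv) {f : PowerSeries C} (hf : NullPS abv f) (n : ℕ) :
    NullPS abv (f ^ n) := by
  have h1 : f ^ n = ∏ _i ∈ Finset.range n, f := by rw [Finset.prod_const, Finset.card_range]
  rw [h1]
  exact null_prod abv hna _ _ fun i _ => hf

/-- The explicit inverse of `X - C α` in `C⟦X⟧`. -/
def invElem (α : C) : PowerSeries C := PowerSeries.mk fun n => -(α⁻¹ ^ (n + 1))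

lemma invElem_mul {α : C} (hα : α ≠ 0) :
    (PowerSeries.X - PowerSeries.C α) * invElem α = 1 := by
  ext n
  rw [sub_mul, map_sub]
  cases n with
  | zero =>
    rw [PowerSeries.coeff_zero_eq_constantCoeff, map_mul, PowerSeries.constantCoeff_X,
      zero_mul]
    simp only [PowerSeries.coeff_zero_eq_constantCoeff, map_mul, PowerSeries.constantCoeff_C,
      invElem, PowerSeries.constantCoeff_mk, map_one]
    field_simp
    simp [hα]
  | succ m =>
    rw [PowerSeries.coeff_succ_X_mul, PowerSeries.coeff_C_mul]
    simp only [invElem, PowerSeries.coeff_mk, PowerSeries.coeff_one, Nat.succ_ne_zero, if_false]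
    have : α * α⁻¹ ^ (m + 1 + 1) = α⁻¹ ^ (m + 1) := by
      rw [pow_succ' α⁻¹ (m + 1), ← mul_assoc, mul_inv_cancel₀ hα, one_mul]
    rw [mul_neg, this]
    ring

lemma bnd_invElem {α : C} (hα : 1 ≤ abv α) : Bnd abv (invElem α) (abv α)⁻¹ := by
  intro n
  have hα0 : abv α ≠ 0 := by positivity
  rw [invElem, PowerSeries.coeff_mk, abv.map_neg, abv.map_pow, map_inv₀]
  calc (abv α)⁻¹ ^ (n + 1) ≤ (abv α)⁻¹ ^ 1 :=
        pow_le_pow_of_le_one (by positivity) (inv_le_one_of_one_le₀ hα) (by omega)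
    _ = (abv α)⁻¹ := pow_one _

lemma null_invElem {α : C} (hα : 1 < abv α) : NullPS abv (invElem α) := by
  have h0 : (0:ℝ) ≤ (abv α)⁻¹ := by positivity
  have h1 : (abv α)⁻¹ < 1 := inv_lt_one_of_one_lt₀ hα
  constructor
  · exact ⟨(abv α)⁻¹, h0, bnd_invElem abv hα.le⟩
  · have := (tendsto_pow_atTop_nhds_zero_of_lt_one h0 h1).comp (tendsto_add_atTop_nat 1)
    refine this.congr fun n => ?_
    rw [Function.comp_apply, invElem, PowerSeries.coeff_mk, abv.map_neg, abv.map_pow, map_inv₀]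

/-- Identification of the inverse of the denominators of `polylogTerm`. -/
lemma denom_inv (θ : C) (hθ : θ ≠ 0) (q : ℕ) {d : ℕ} (s : Fin d → ℕ+) (iv : Fin d → ℕ) :
    (∏ k, (∏ j ∈ Finset.Icc 1 (iv k),
        (PowerSeries.X - PowerSeries.C (θ ^ q ^ j))) ^ (s k : ℕ))⁻¹
      = ∏ k, (∏ j ∈ Finset.Icc 1 (iv k), invElem (θ ^ q ^ j)) ^ (s k : ℕ) := by
  have hmul : (∏ k, (∏ j ∈ Finset.Icc 1 (iv k),
        (PowerSeries.X - PowerSeries.C (θ ^ q ^ j))) ^ (s k : ℕ)) *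
      (∏ k, (∏ j ∈ Finset.Icc 1 (iv k), invElem (θ ^ q ^ j)) ^ (s k : ℕ)) = 1 := by
    rw [← Finset.prod_mul_distrib]
    refine Finset.prod_eq_one fun k _ => ?_
    rw [← mul_pow, ← Finset.prod_mul_distrib]
    rw [Finset.prod_congr rfl fun j _ => invElem_mul (pow_ne_zero _ hθ),
      Finset.prod_const_one, one_pow]
  have hc : PowerSeries.constantCoeff (∏ k, (∏ j ∈ Finset.Icc 1 (iv k),
      (PowerSeries.X - PowerSeries.C (θ ^ q ^ j))) ^ (s k : ℕ)) ≠ 0 := by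
    have h := congrArg (PowerSeries.constantCoeff) hmul
    rw [map_mul, map_one] at h
    exact left_ne_zero_of_mul_eq_one h
  exact ((PowerSeries.eq_inv_iff_mul_eq_one hc).mpr (by rw [mul_comm] at hmul; exact hmul)).symm

lemma geom_aux (x : ℝ) (i : ℕ) :
    (x - 1) * (∑ j ∈ Finset.Icc 1 i, x ^ j) = x ^ (i + 1) - x := by
  have hset : Finset.range (i + 1) = insert 0 (Finset.Icc 1 i) := by
    ext j
    simp only [Finset.mem_range, Finset.mem_insert, Finset.mem_Icc]
    omega
  have h1 := geom_sum_mul x (i + 1)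
  rw [hset, Finset.sum_insert (by simp), pow_zero] at h1
  nlinarith [h1]

/-- The key real identity for the term bounds. -/
lemma key_eq {β : ℝ} (hβ : 0 < β) (sk q i : ℕ) (hq : 1 < q) (r : ℝ) :
    r ^ q ^ i * (∏ j ∈ Finset.Icc 1 i, (β ^ q ^ j)⁻¹) ^ sk
      = β ^ (((sk : ℝ) * (q : ℝ)) / ((q : ℝ) - 1)) *
        (r / β ^ (((sk : ℝ) * (q : ℝ)) / ((q : ℝ) - 1))) ^ q ^ i := by
  set e : ℝ := ((sk : ℝ) * (q : ℝ)) / ((q : ℝ) - 1) with he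
  have hq1 : (1:ℝ) < (q : ℝ) := by exact_mod_cast hq
  have hqne : (q : ℝ) - 1 ≠ 0 := by linarith
  have hB : 0 < β ^ e := Real.rpow_pos_of_pos hβ e
  have hprod : (∏ j ∈ Finset.Icc 1 i, (β ^ q ^ j)⁻¹)
      = (β ^ (∑ j ∈ Finset.Icc 1 i, q ^ j))⁻¹ := by
    rw [Finset.prod_inv_distrib, Finset.prod_pow_eq_pow_sum]
  rw [hprod, inv_pow, ← pow_mul]
  rw [div_pow, div_eq_mul_inv, mul_comm (β ^ e), mul_assoc]
  congr 1
  -- remaining : (β ^ (T * sk))⁻¹ = ((β ^ e) ^ q ^ i)⁻¹ * β ^ e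
  have hBQ : (β ^ e) ^ q ^ i = β ^ (e * ((q ^ i : ℕ) : ℝ)) := by
    rw [Real.rpow_mul hβ.le, Real.rpow_natCast]
  have hBT : β ^ ((∑ j ∈ Finset.Icc 1 i, q ^ j) * sk)
      = β ^ ((((∑ j ∈ Finset.Icc 1 i, q ^ j) * sk : ℕ)) : ℝ) := by
    rw [Real.rpow_natCast]
  have hexp : e * ((q ^ i : ℕ) : ℝ) = e + (((∑ j ∈ Finset.Icc 1 i, q ^ j) * sk : ℕ) : ℝ) := by
    have hg := geom_aux (q : ℝ) i
    push_cast
    rw [he]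
    field_simp
    linear_combination (-(sk : ℝ)) * hg
  have hBne : β ^ e ≠ 0 := ne_of_gt hB
  have hpow : (β ^ e) ^ q ^ i = β ^ e * β ^ ((∑ j ∈ Finset.Icc 1 i, q ^ j) * sk) := by
    rw [hBQ, hexp, Real.rpow_add hβ, Real.rpow_natCast]
  rw [hpow, mul_inv, mul_comm (β ^ e)⁻¹, mul_assoc, inv_mul_cancel₀ hBne, mul_one]

end Aux

/-- If `‖u_k‖_∞ < |θ|_∞^{s_k·q/(q-1)}` for all `k`, then the series
`L_{l,u,s}` converges in the Tate algebra `𝕋`: summing the terms (each expanded as a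
power series on the closed unit disk) yields a power series whose coefficients tend
to `0`. -/
theorem polylog_mem_tate
    (C : Type) [Field C] (p : ℕ) [Fact p.Prime] [CharP C p] [PerfectRing C p]
    [IsAlgClosed C] (abv : AbsoluteValue C ℝ) (θ : C)
    (hna : IsNonarch abv) (hcomplete : AbvComplete abv) (habsθ : abv θ = p)
    (l : ℕ) (hl : 0 < l) (d : ℕ) (s : Fin d → ℕ+) (u : Fin d → Polynomial C)
    (huK : ∀ k, CoeffsIn (Kbar θ) (u k))
    (huG : ∀ k, GaussBound p abv θ l (s k : ℕ) (u k)) :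
    ∃ Lser : PowerSeries C, IsPolylog p abv θ l s u Lser ∧ InTate abv Lser := by
  classical
  have hp2 : 1 < p := (Fact.out : p.Prime).one_lt
  have hq : 1 < p ^ l := Nat.one_lt_pow hl.ne' hp2
  have hθ1 : 1 < abv θ := by rw [habsθ]; exact_mod_cast hp2
  have hθpos : 0 < abv θ := lt_trans one_pos hθ1
  have hθ0 : θ ≠ 0 := by
    intro h
    rw [h, abv.map_zero] at hθ1
    linarith
  have habspow : ∀ j : ℕ, 1 < abv (θ ^ (p ^ l) ^ j) := by
    intro j
    rw [abv.map_pow]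
    exact one_lt_pow₀ hθ1 (pow_ne_zero j (by omega))
  have hNull : ∀ i : DecTuples d, NullPS abv (polylogTerm p θ l s u i) := by
    intro i
    simp only [polylogTerm]
    rw [denom_inv θ hθ0 (p ^ l) s i.1]
    refine null_mul abv hna ?_ ?_
    · exact null_prod abv hna _ _ fun k _ => null_poly abv _
    · refine null_prod abv hna _ _ fun k _ => null_pow abv hna ?_ _
      exact null_prod abv hna _ _ fun j _ => null_invElem abv (habspow j)
  rcases Nat.eq_zero_or_pos d with hd | hd
  · -- degenerate case `d = 0`
    subst hd
    haveI : Subsingleton (DecTuples 0) :=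
      ⟨fun a b => Subtype.ext (funext fun k => k.elim0)⟩
    set i₀ : DecTuples 0 := ⟨fun _ => 0, fun a b _ => a.elim0⟩ with hi₀
    refine ⟨polylogTerm p θ l s u i₀, ?_, (hNull i₀).2⟩
    intro ε hε
    refine ⟨{i₀}, fun G hG n => ?_⟩
    have hGeq : G = {i₀} := by
      refine Finset.Subset.antisymm (fun x hx => ?_) hG
      simp [Subsingleton.elim x i₀]
    rw [hGeq, Finset.sum_singleton, sub_self, map_zero, abv.map_zero]
    exact hε
  · -- main case `0 < d`
    set k0 : Fin d := ⟨0, hd⟩ with hk0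
    have hcast : ((p ^ l : ℕ) : ℝ) = (p : ℝ) ^ l := by push_cast; ring
    have hdata : ∀ k : Fin d, ∃ R B' : ℝ, 0 ≤ R ∧ 0 < B' ∧ R < B' ∧
        (∀ n, abv ((u k).coeff n) ≤ R) ∧
        ∀ i : ℕ, R ^ (p ^ l) ^ i *
            (∏ j ∈ Finset.Icc 1 i, (abv θ ^ (p ^ l) ^ j)⁻¹) ^ ((s k : ℕ)) =
          B' * (R / B') ^ (p ^ l) ^ i := by
      intro k
      refine ⟨(Finset.range ((u k).natDegree + 1)).sup' Finset.nonempty_range_add_one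
          (fun n => abv ((u k).coeff n)),
        abv θ ^ ((((s k : ℕ) : ℝ) * ((p ^ l : ℕ) : ℝ)) / (((p ^ l : ℕ) : ℝ) - 1)),
        ?_, ?_, ?_, ?_, ?_⟩
      · exact le_trans (abv.nonneg ((u k).coeff 0))
          (Finset.le_sup' (fun n => abv ((u k).coeff n)) (Finset.mem_range.mpr (Nat.succ_pos (u k).natDegree)))
      · exact Real.rpow_pos_of_pos hθpos _
      · refine (Finset.sup'_lt_iff _).mpr fun n _ => ?_
        rw [hcast]
        exact huG k n
      · intro n
        rcases le_or_gt n (u k).natDegree with h | h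
        · exact Finset.le_sup' (fun n => abv ((u k).coeff n)) (Finset.mem_range.mpr (Nat.lt_succ_of_le h))
        · rw [(u k).coeff_eq_zero_of_natDegree_lt h, abv.map_zero]
          exact le_trans (abv.nonneg ((u k).coeff 0))
            (Finset.le_sup' (fun n => abv ((u k).coeff n)) (Finset.mem_range.mpr (Nat.succ_pos (u k).natDegree)))
      · exact fun i => key_eq hθpos (s k : ℕ) (p ^ l) i hq _
    choose R B' hR0 hB'pos hRB hRb hkey using hdata
    set A : ℝ := ∏ k, B' k with hAdef
    set cc : ℝ := R k0 / B' k0 with hccdef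
    have hA : 0 < A := Finset.prod_pos fun k _ => hB'pos k
    have hcc0 : 0 ≤ cc := div_nonneg (hR0 k0) (hB'pos k0).le
    have hcc1 : cc < 1 := (div_lt_one (hB'pos k0)).mpr (hRB k0)
    have hAcc : ∀ N : ℕ, 0 ≤ A * cc ^ N := fun N => mul_nonneg hA.le (pow_nonneg hcc0 N)
    have hinvnn : ∀ j : ℕ, (0:ℝ) ≤ (abv θ ^ (p ^ l) ^ j)⁻¹ :=
      fun j => inv_nonneg.mpr (pow_nonneg hθpos.le _)
    -- the quantitative bound on each term
    have hbnd : ∀ i : DecTuples d,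
        Bnd abv (polylogTerm p θ l s u i) (A * cc ^ (i.1 k0)) := by
      intro i
      simp only [polylogTerm]
      rw [denom_inv θ hθ0 (p ^ l) s i.1]
      have h1 : Bnd abv (∏ k, (((u k).map (iterateFrobenius C p (i.1 k * l)) :
            Polynomial C) : PowerSeries C)) (∏ k, R k ^ (p ^ l) ^ (i.1 k)) := by
        refine bnd_prod abv hna _ _ _ (fun k _ => ?_) (fun k _ => pow_nonneg (hR0 k) _)
        intro n
        rw [Polynomial.coeff_coe, Polynomial.coeff_map, iterateFrobenius_def, abv.map_pow]
        calc abv ((u k).coeff n) ^ p ^ (i.1 k * l)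
            ≤ R k ^ p ^ (i.1 k * l) := pow_le_pow_left₀ (abv.nonneg _) (hRb k n) _
          _ = R k ^ (p ^ l) ^ (i.1 k) := by rw [mul_comm (i.1 k) l, pow_mul]
      have h2 : Bnd abv (∏ k, (∏ j ∈ Finset.Icc 1 (i.1 k),
            invElem (θ ^ (p ^ l) ^ j)) ^ (s k : ℕ))
          (∏ k, (∏ j ∈ Finset.Icc 1 (i.1 k), (abv θ ^ (p ^ l) ^ j)⁻¹) ^ (s k : ℕ)) := by
        refine bnd_prod abv hna _ _ _ (fun k _ => ?_)
          (fun k _ => pow_nonneg (Finset.prod_nonneg fun j _ => hinvnn j) _)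
        refine bnd_pow abv hna ?_ (Finset.prod_nonneg fun j _ => hinvnn j) _
        refine bnd_prod abv hna _ _ _ (fun j _ => ?_) (fun j _ => hinvnn j)
        have h := bnd_invElem abv (le_of_lt (habspow j))
        rwa [abv.map_pow] at h
      refine bnd_mono abv (bnd_mul abv hna h1 h2
        (Finset.prod_nonneg fun k _ => pow_nonneg (hR0 k) _)
        (Finset.prod_nonneg fun k _ =>
          pow_nonneg (Finset.prod_nonneg fun j _ => hinvnn j) _)) ?_
      rw [← Finset.prod_mul_distrib,
        Finset.prod_congr rfl (fun k _ => hkey k (i.1 k)), Finset.prod_mul_distrib]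
      refine mul_le_mul_of_nonneg_left ?_ (Finset.prod_nonneg fun k _ => (hB'pos k).le)
      have hfac0 : ∀ k : Fin d, (0:ℝ) ≤ (R k / B' k) ^ (p ^ l) ^ (i.1 k) :=
        fun k => pow_nonneg (div_nonneg (hR0 k) (hB'pos k).le) _
      have hfac1 : ∀ k : Fin d, (R k / B' k) ^ (p ^ l) ^ (i.1 k) ≤ 1 :=
        fun k => pow_le_one₀ (div_nonneg (hR0 k) (hB'pos k).le)
          ((div_lt_one (hB'pos k)).mpr (hRB k)).le
      calc (∏ k, (R k / B' k) ^ (p ^ l) ^ (i.1 k))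
          = (∏ k ∈ Finset.univ.erase k0, (R k / B' k) ^ (p ^ l) ^ (i.1 k)) *
              (R k0 / B' k0) ^ (p ^ l) ^ (i.1 k0) :=
            (Finset.prod_erase_mul _ _ (Finset.mem_univ k0)).symm
        _ ≤ 1 * (R k0 / B' k0) ^ (p ^ l) ^ (i.1 k0) :=
            mul_le_mul_of_nonneg_right
              (Finset.prod_le_one (fun k _ => hfac0 k) (fun k _ => hfac1 k)) (hfac0 k0)
        _ = cc ^ (p ^ l) ^ (i.1 k0) := by rw [one_mul]
        _ ≤ cc ^ (i.1 k0) :=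
            pow_le_pow_of_le_one hcc0 hcc1.le (Nat.lt_pow_self hq).le
    -- tail estimates
    have htail : Tendsto (fun N : ℕ => A * cc ^ N) atTop (nhds 0) := by
      have h := (tendsto_pow_atTop_nhds_zero_of_lt_one hcc0 hcc1).const_mul A
      simpa using h
    have hsmall : ∀ ε : ℝ, 0 < ε → ∃ N : ℕ, A * cc ^ N < ε := by
      intro ε hε
      obtain ⟨N, hN⟩ := Metric.tendsto_atTop.mp htail ε hε
      have h := hN N le_rfl
      rw [Real.dist_eq, sub_zero, abs_of_nonneg (hAcc N)] at h
      exact ⟨N, h⟩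
    -- finite truncation sets
    have hfin : ∀ N : ℕ, {i : DecTuples d | i.1 k0 < N}.Finite := by
      intro N
      have h1 : (Set.pi Set.univ (fun _ : Fin d => Set.Iio N)).Finite :=
        Set.Finite.pi fun _ => Set.finite_Iio N
      refine (h1.preimage (Subtype.val_injective.injOn)).subset ?_
      intro i hi
      intro k _
      exact lt_of_le_of_lt (i.2.antitone (Fin.le_def.mpr (Nat.zero_le _))) hi
    set SN : ℕ → Finset (DecTuples d) := fun N => (hfin N).toFinset with hSNdef
    have hSNmem : ∀ (N : ℕ) (i : DecTuples d), i ∈ SN N ↔ i.1 k0 < N :=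
      fun N i => (hfin N).mem_toFinset
    have hSNsub : ∀ {M N : ℕ}, M ≤ N → SN M ⊆ SN N := by
      intro M N hMN i hi
      rw [hSNmem] at hi ⊢
      omega
    set g : ℕ → ℕ → C :=
      fun n N => ∑ i ∈ SN N, PowerSeries.coeff n (polylogTerm p θ l s u i) with hgdef
    have hdiff : ∀ n M N, M ≤ N → abv (g n N - g n M) ≤ A * cc ^ M := by
      intro n M N hMN
      simp only [hgdef]
      rw [← Finset.sum_sdiff_eq_sub (hSNsub hMN)]
      refine abv_sum_le abv hna _ _ (hAcc M) ?_
      intro i hi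
      rw [Finset.mem_sdiff, hSNmem, hSNmem] at hi
      have hMi : M ≤ i.1 k0 := by omega
      exact (hbnd i n).trans
        (mul_le_mul_of_nonneg_left (pow_le_pow_of_le_one hcc0 hcc1.le hMi) hA.le)
    have hcau : ∀ n, ∃ x, TendstoAbv abv (g n) x := by
      intro n
      refine hcomplete _ ?_
      intro ε hε
      obtain ⟨N0, hN0⟩ := hsmall ε hε
      refine ⟨N0, fun m hm n' hn' => ?_⟩
      rcases le_total m n' with h | h
      · rw [abv.map_sub]
        exact lt_of_le_of_lt ((hdiff n m n' h).trans
          (mul_le_mul_of_nonneg_left (pow_le_pow_of_le_one hcc0 hcc1.le hm) hA.le)) hN0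
      · exact lt_of_le_of_lt ((hdiff n n' m h).trans
          (mul_le_mul_of_nonneg_left (pow_le_pow_of_le_one hcc0 hcc1.le hn') hA.le)) hN0
    choose a ha using hcau
    have hga : ∀ n N, abv (g n N - a n) ≤ A * cc ^ N := by
      intro n N
      refine le_of_forall_pos_le_add fun δ hδ => ?_
      obtain ⟨M0, hM0⟩ := ha n δ hδ
      have h1 : abv (g n (max N M0) - a n) < δ := hM0 _ (le_max_right _ _)
      have h2 : abv (g n N - g n (max N M0)) ≤ A * cc ^ N := by
        rw [abv.map_sub]
        exact hdiff n N _ (le_max_left _ _)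
      have h3 : g n N - a n = (g n N - g n (max N M0)) + (g n (max N M0) - a n) := by ring
      rw [h3]
      refine le_trans (hna _ _) (max_le ?_ ?_)
      · exact h2.trans (le_add_of_nonneg_right hδ.le)
      · exact h1.le.trans (le_add_of_nonneg_left (hAcc N))
    refine ⟨PowerSeries.mk a, ?_, ?_⟩
    · -- `IsPolylog`
      intro ε hε
      obtain ⟨N0, hN0⟩ := hsmall ε hε
      refine ⟨SN N0, fun G hG n => ?_⟩
      rw [map_sub, map_sum, PowerSeries.coeff_mk]
      have e1 : abv ((∑ i ∈ G, PowerSeries.coeff n (polylogTerm p θ l s u i)) - g n N0)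
          ≤ A * cc ^ N0 := by
        simp only [hgdef]
        rw [← Finset.sum_sdiff_eq_sub hG]
        refine abv_sum_le abv hna _ _ (hAcc N0) ?_
        intro i hi
        rw [Finset.mem_sdiff, hSNmem] at hi
        have hMi : N0 ≤ i.1 k0 := by omega
        exact (hbnd i n).trans
          (mul_le_mul_of_nonneg_left (pow_le_pow_of_le_one hcc0 hcc1.le hMi) hA.le)
      have e2 : abv (g n N0 - a n) ≤ A * cc ^ N0 := hga n N0
      have h3 : (∑ i ∈ G, PowerSeries.coeff n (polylogTerm p θ l s u i)) - a n
          = ((∑ i ∈ G, PowerSeries.coeff n (polylogTerm p θ l s u i)) - g n N0) +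
            (g n N0 - a n) := by ring
      rw [h3]
      exact lt_of_le_of_lt (le_trans (hna _ _) (max_le e1 e2)) hN0
    · -- `InTate`
      show Tendsto (fun n => abv (PowerSeries.coeff n (PowerSeries.mk a))) atTop (nhds 0)
      simp only [PowerSeries.coeff_mk]
      rw [Metric.tendsto_atTop]
      intro ε hε
      obtain ⟨N0, hN0⟩ := hsmall (ε / 2) (half_pos hε)
      choose Nt hNt using fun i : DecTuples d =>
        Metric.tendsto_atTop.mp (hNull i).2 (ε / 2) (half_pos hε)
      refine ⟨(SN N0).sup Nt, fun n hn => ?_⟩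
      rw [Real.dist_eq, sub_zero, abs_of_nonneg (abv.nonneg _)]
      have e1 : abv (g n N0) ≤ ε / 2 := by
        simp only [hgdef]
        refine abv_sum_le abv hna _ _ (half_pos hε).le ?_
        intro i hi
        have h := hNt i n (le_trans (Finset.le_sup hi) hn)
        rw [Real.dist_eq, sub_zero, abs_of_nonneg (abv.nonneg _)] at h
        exact h.le
      have e2 : abv (a n - g n N0) ≤ A * cc ^ N0 := by
        rw [abv.map_sub]
        exact hga n N0
      calc abv (a n) = abv (g n N0 + (a n - g n N0)) :=
            congrArg abv (by ring)
        _ ≤ max (abv (g n N0)) (abv (a n - g n N0)) := hna _ _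
        _ ≤ ε / 2 := max_le e1 (e2.trans hN0.le)
        _ < ε := half_lt_self hε

end

end Carlitz
end

section
/- Let l ≥ 1 (q = p^l). The (−l)-fold twist f ↦ f^(−l) is a ring automorphism of the Tate algebra T and extends uniquely to its fraction field L. If f ∈ L satisfies f^(−l) = f, then f ∈ F_q(t), the field of rational functions in t with coefficients in the finite field F_q ⊆ C∞. -/
namespace Carlitz

noncomputable section

open Filter Polynomial


section Aux

variable {C : Type} [Field C] (abv : AbsoluteValue C ℝ)

/-! ### Basic nonarchimedean facts -/

lemma nonarch_sub (hna : IsNonarch abv) (x y : C) :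
    abv (x - y) ≤ max (abv x) (abv y) := by
  rw [sub_eq_add_neg]
  simpa [abv.map_neg] using hna x (-y)

lemma nonarch_sum_le (hna : IsNonarch abv) {ι : Type*} (s : Finset ι) (f : ι → C) (K : ℝ)
    (hK : 0 ≤ K) (h : ∀ i ∈ s, abv (f i) ≤ K) : abv (∑ i ∈ s, f i) ≤ K := by
  classical
  induction s using Finset.induction_on with
  | empty => simpa using hK
  | insert _ _ hni ih =>
    rename_i a s
    rw [Finset.sum_insert hni]
    exact le_trans (hna _ _) (max_le (h a (Finset.mem_insert_self _ _))
      (ih fun i hi => h i (Finset.mem_insert_of_mem hi)))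

lemma nonarch_sum_lt (hna : IsNonarch abv) {ι : Type*} (s : Finset ι) (f : ι → C) (K : ℝ)
    (hK : 0 < K) (h : ∀ i ∈ s, abv (f i) < K) : abv (∑ i ∈ s, f i) < K := by
  classical
  induction s using Finset.induction_on with
  | empty => simpa using hK
  | insert _ _ hni ih =>
    rename_i a s
    rw [Finset.sum_insert hni]
    exact lt_of_le_of_lt (hna _ _) (max_lt (h a (Finset.mem_insert_self _ _))
      (ih fun i hi => h i (Finset.mem_insert_of_mem hi)))

lemma nonarch_add_dominant (hna : IsNonarch abv) {x y : C} (h : abv y < abv x) :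
    abv x ≤ abv (x + y) := by
  have h2 : abv x ≤ max (abv (x + y)) (abv y) := by
    simpa [abv.map_neg] using hna (x + y) (-y)
  rcases le_max_iff.1 h2 with h3 | h3
  · exact h3
  · exact absurd h3 (not_le.2 h)

/-! ### Limits with respect to `abv` -/

lemma tendstoAbv_const (x : C) : TendstoAbv abv (fun _ => x) x :=
  fun ε hε => ⟨0, fun n _ => by simpa using hε⟩

lemma tendstoAbv_unique {u : ℕ → C} {x y : C} (hu : TendstoAbv abv u x)
    (hv : TendstoAbv abv u y) : x = y := by
  by_contra h
  have hxy : 0 < abv (x - y) := abv.pos (sub_ne_zero.2 h)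
  obtain ⟨N1, h1⟩ := hu (abv (x - y) / 2) (by linarith)
  obtain ⟨N2, h2⟩ := hv (abv (x - y) / 2) (by linarith)
  set n := max N1 N2
  have e1 := h1 n (le_max_left _ _)
  have e2 := h2 n (le_max_right _ _)
  have key : abv (x - y) ≤ abv (x - u n) + abv (u n - y) := by
    have := abv.add_le (x - u n) (u n - y)
    simpa [sub_add_sub_cancel] using this
  rw [abv.map_sub x (u n)] at key
  linarith

lemma tendstoAbv_add {u v : ℕ → C} {x y : C} (hu : TendstoAbv abv u x)
    (hv : TendstoAbv abv v y) : TendstoAbv abv (fun n => u n + v n) (x + y) := by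
  intro ε hε
  obtain ⟨N1, h1⟩ := hu (ε / 2) (by linarith)
  obtain ⟨N2, h2⟩ := hv (ε / 2) (by linarith)
  refine ⟨max N1 N2, fun n hn => ?_⟩
  have e1 := h1 n (le_trans (le_max_left _ _) hn)
  have e2 := h2 n (le_trans (le_max_right _ _) hn)
  have key : abv (u n + v n - (x + y)) ≤ abv (u n - x) + abv (v n - y) := by
    have := abv.add_le (u n - x) (v n - y)
    have h3 : u n - x + (v n - y) = u n + v n - (x + y) := by ring
    rwa [h3] at this
  linarith

lemma tendstoAbv_mul_const {u : ℕ → C} {x : C} (hu : TendstoAbv abv u x) (k : C) :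
    TendstoAbv abv (fun n => u n * k) (x * k) := by
  intro ε hε
  have hpos : 0 < ε / (abv k + 1) := by
    apply div_pos hε
    have := abv.nonneg k
    linarith
  obtain ⟨N, hN⟩ := hu _ hpos
  refine ⟨N, fun n hn => ?_⟩
  have e1 := hN n hn
  have key : abv (u n * k - x * k) = abv (u n - x) * abv k := by
    rw [← sub_mul, map_mul]
  rw [key]
  calc abv (u n - x) * abv k ≤ (ε / (abv k + 1)) * abv k := by
        apply mul_le_mul_of_nonneg_right (le_of_lt e1) (abv.nonneg k)
    _ < ε := by
        rw [div_mul_eq_mul_div, div_lt_iff₀ (by have := abv.nonneg k; linarith)]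
        have := abv.nonneg k
        nlinarith

lemma tendstoAbv_sum {ι : Type*} (s : Finset ι) (u : ι → ℕ → C) (x : ι → C)
    (h : ∀ i ∈ s, TendstoAbv abv (u i) (x i)) :
    TendstoAbv abv (fun n => ∑ i ∈ s, u i n) (∑ i ∈ s, x i) := by
  classical
  induction s using Finset.induction_on with
  | empty => simpa using tendstoAbv_const abv 0
  | insert _ _ hni ih =>
    rename_i a s
    simp only [Finset.sum_insert hni]
    exact tendstoAbv_add abv (h a (Finset.mem_insert_self _ _))
      (ih fun i hi => h i (Finset.mem_insert_of_mem hi))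

lemma tendstoAbv_sub_le {u : ℕ → C} {x y : C} {N : ℕ} {K : ℝ}
    (h : TendstoAbv abv u x) (hb : ∀ n, N ≤ n → abv (u n - y) ≤ K) :
    abv (x - y) ≤ K := by
  refine le_of_forall_pos_le_add fun ε hε => ?_
  obtain ⟨N1, h1⟩ := h ε hε
  set n := max N N1
  have e1 := h1 n (le_max_right _ _)
  have e2 := hb n (le_max_left _ _)
  have key : abv (x - y) ≤ abv (x - u n) + abv (u n - y) := by
    have := abv.add_le (x - u n) (u n - y)
    simpa [sub_add_sub_cancel] using this
  rw [abv.map_sub x (u n)] at key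
  linarith

/-! ### Tate algebra membership -/

lemma inTate_iff {f : PowerSeries C} :
    InTate abv f ↔ ∀ ε : ℝ, 0 < ε → ∃ N, ∀ n, N ≤ n → abv (PowerSeries.coeff n f) < ε := by
  rw [InTate, Metric.tendsto_atTop]
  constructor
  · intro h ε hε
    obtain ⟨N, hN⟩ := h ε hε
    exact ⟨N, fun n hn => by
      have := hN n hn
      rwa [Real.dist_eq, sub_zero, abs_of_nonneg (abv.nonneg _)] at this⟩
  · intro h ε hε
    obtain ⟨N, hN⟩ := h ε hε
    exact ⟨N, fun n hn => by
      rw [Real.dist_eq, sub_zero, abs_of_nonneg (abv.nonneg _)]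
      exact hN n hn⟩

lemma inTate_coe (P : Polynomial C) : InTate abv (P : PowerSeries C) := by
  rw [inTate_iff]
  intro ε hε
  refine ⟨P.natDegree + 1, fun n hn => ?_⟩
  have h0 : P.coeff n = 0 := Polynomial.coeff_eq_zero_of_natDegree_lt (by omega)
  rw [Polynomial.coeff_coe, h0]
  simpa using hε

lemma inTate_bound {f : PowerSeries C} (hf : InTate abv f) :
    ∃ U : ℝ, 0 < U ∧ ∀ n, abv (PowerSeries.coeff n f) ≤ U := by
  obtain ⟨N, hN⟩ := (inTate_iff abv).1 hf 1 one_pos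
  have hne : (Finset.range (N + 1)).Nonempty := Finset.nonempty_range_iff.2 (by omega)
  set U0 := (Finset.range (N + 1)).sup' hne (fun n => abv (PowerSeries.coeff n f))
  refine ⟨max 1 U0, lt_of_lt_of_le one_pos (le_max_left _ _), fun n => ?_⟩
  rcases le_or_gt n N with h | h
  · refine le_trans (Finset.le_sup' (fun n => abv (PowerSeries.coeff n f))
      (Finset.mem_range.2 (show n < N + 1 by omega))) (le_max_right _ _)
  · exact le_trans (le_of_lt (hN n (by omega))) (le_max_left _ _)

lemma inTate_mul (hna : IsNonarch abv) {f g : PowerSeries C} (hf : InTate abv f)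
    (hg : InTate abv g) : InTate abv (f * g) := by
  obtain ⟨U, hU, hUb⟩ := inTate_bound abv hf
  obtain ⟨V, hV, hVb⟩ := inTate_bound abv hg
  rw [inTate_iff] at hf hg ⊢
  intro ε hε
  obtain ⟨Nf, hNf⟩ := hf (ε / V) (div_pos hε hV)
  obtain ⟨Ng, hNg⟩ := hg (ε / U) (div_pos hε hU)
  refine ⟨Nf + Ng, fun n hn => ?_⟩
  rw [PowerSeries.coeff_mul]
  apply nonarch_sum_lt abv hna _ _ _ hε
  rintro ⟨i, j⟩ hij
  rw [Finset.HasAntidiagonal.mem_antidiagonal] at hij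
  rw [map_mul]
  rcases le_or_gt Nf i with hi | hi
  · calc abv (PowerSeries.coeff i f) * abv (PowerSeries.coeff j g)
        ≤ abv (PowerSeries.coeff i f) * V :=
          mul_le_mul_of_nonneg_left (hVb j) (abv.nonneg _)
      _ < (ε / V) * V := mul_lt_mul_of_pos_right (hNf i hi) hV
      _ = ε := div_mul_cancel₀ ε (ne_of_gt hV)
  · have hj : Ng ≤ j := by omega
    calc abv (PowerSeries.coeff i f) * abv (PowerSeries.coeff j g)
        ≤ U * abv (PowerSeries.coeff j g) :=
          mul_le_mul_of_nonneg_right (hUb i) (abv.nonneg _)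
      _ < U * (ε / U) := mul_lt_mul_of_pos_left (hNg j hj) hU
      _ = ε := mul_div_cancel₀ ε (ne_of_gt hU)

lemma inTate_shift {f : PowerSeries C} (s : ℕ) (hf : InTate abv f) (g : PowerSeries C)
    (hg : ∀ n, PowerSeries.coeff n g = PowerSeries.coeff (n + s) f) :
    InTate abv g := by
  rw [inTate_iff] at hf ⊢
  intro ε hε
  obtain ⟨N, hN⟩ := hf ε hε
  exact ⟨N, fun n hn => by rw [hg]; exact hN (n + s) (by omega)⟩

/-! ### Last attained maximum of a null sequence -/

lemma exists_last_max (u : ℕ → ℝ) (h0 : ∃ j, 0 < u j)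
    (htend : ∀ ε : ℝ, 0 < ε → ∃ N, ∀ n, N ≤ n → u n < ε) :
    ∃ i₀, 0 < u i₀ ∧ (∀ i, u i ≤ u i₀) ∧ ∀ i, i₀ < i → u i < u i₀ := by
  classical
  obtain ⟨j₀, hj₀⟩ := h0
  obtain ⟨N, hN⟩ := htend (u j₀) hj₀
  have hj₀N : j₀ < N := by
    by_contra h
    exact absurd (hN j₀ (by omega)) (lt_irrefl _)
  have hne : (Finset.range N).Nonempty := ⟨j₀, Finset.mem_range.2 hj₀N⟩
  set m := (Finset.range N).sup' hne u with hm
  obtain ⟨iw, hiw, hiwm⟩ := Finset.exists_mem_eq_sup' hne u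
  have htne : ((Finset.range N).filter (fun i => u i = m)).Nonempty :=
    ⟨iw, Finset.mem_filter.2 ⟨hiw, hiwm.symm⟩⟩
  set i₀ := ((Finset.range N).filter (fun i => u i = m)).max' htne with hi₀
  have hi₀mem := Finset.max'_mem _ htne
  rw [Finset.mem_filter] at hi₀mem
  have hui₀ : u i₀ = m := hi₀mem.2
  have hj₀m : u j₀ ≤ m := Finset.le_sup' u (Finset.mem_range.2 hj₀N)
  have hall : ∀ i, u i ≤ u i₀ := by
    intro i
    rcases lt_or_ge i N with h | h
    · rw [hui₀]; exact Finset.le_sup' u (Finset.mem_range.2 h)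
    · rw [hui₀]; exact le_trans (le_of_lt (hN i h)) hj₀m
  refine ⟨i₀, lt_of_lt_of_le hj₀ (hall j₀), hall, fun i hi => ?_⟩
  rcases lt_or_ge i N with h | h
  · rcases eq_or_lt_of_le (hall i) with he | hlt
    · exfalso
      have : i ∈ (Finset.range N).filter (fun j => u j = m) :=
        Finset.mem_filter.2 ⟨Finset.mem_range.2 h, by rw [← hui₀]; exact he⟩
      have := Finset.le_max' _ i this
      omega
    · exact hlt
  · rw [hui₀]; exact lt_of_lt_of_le (hN i h) hj₀m

/-! ### Twist homomorphism facts -/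

section Twist

variable (p : ℕ) [Fact p.Prime] [CharP C p] [PerfectRing C p]

lemma twistHom_twistHom (a b : ℤ) (x : C) :
    twistHom p a (twistHom p b x) = twistHom p (a + b) x := by
  show (frobeniusEquiv C p ^ a : C ≃+* C) ((frobeniusEquiv C p ^ b : C ≃+* C) x)
    = (frobeniusEquiv C p ^ (a + b) : C ≃+* C) x
  rw [zpow_add]
  rfl

lemma twistHom_zero_apply (x : C) : twistHom p 0 x = x := by
  show (frobeniusEquiv C p ^ (0 : ℤ) : C ≃+* C) x = x
  rw [zpow_zero]
  rfl

lemma twistHom_nat (n : ℕ) (x : C) : twistHom p (n : ℤ) x = x ^ p ^ n := by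
  show (frobeniusEquiv C p ^ (n : ℤ) : C ≃+* C) x = x ^ p ^ n
  rw [zpow_natCast]
  induction n generalizing x with
  | zero =>
    rw [pow_zero, pow_zero, pow_one]
    rfl
  | succ n ih =>
    rw [pow_succ]
    show (frobeniusEquiv C p ^ n : C ≃+* C) (frobeniusEquiv C p x) = _
    rw [ih (frobeniusEquiv C p x), frobeniusEquiv_apply, frobenius_def, ← pow_mul, ← pow_succ']

lemma twistHom_cancel (l : ℕ) (x : C) :
    twistHom p (l : ℤ) (twistHom p (-(l : ℤ)) x) = x := by
  rw [twistHom_twistHom, show (l : ℤ) + -(l : ℤ) = 0 by ring, twistHom_zero_apply]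

lemma twistHom_injective (k : ℤ) : Function.Injective (twistHom p k : C → C) :=
  (frobeniusEquiv C p ^ k : C ≃+* C).injective

lemma coeff_twistPS (k : ℤ) (n : ℕ) (f : PowerSeries C) :
    PowerSeries.coeff n (twistPS p k f) = twistHom p k (PowerSeries.coeff n f) :=
  PowerSeries.coeff_map (twistHom p k) n f

lemma mem_Fq_of_fixed (l : ℕ) (x : C) (h : twistHom p (-(l : ℤ)) x = x) :
    x ∈ Fq C p l := by
  show x ^ p ^ l = x
  calc x ^ p ^ l = twistHom p (l : ℤ) x := (twistHom_nat p l x).symm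
    _ = twistHom p (l : ℤ) (twistHom p (-(l : ℤ)) x) := by rw [h]
    _ = x := twistHom_cancel p l x

lemma abv_twist_pow (l : ℕ) (x : C) :
    abv (twistHom p (-(l : ℤ)) x) ^ p ^ l = abv x := by
  rw [← map_pow]
  congr 1
  rw [← twistHom_nat p l (twistHom p (-(l : ℤ)) x), twistHom_cancel]

end Twist

/-! ### Division with remainder by a dominant polynomial -/

lemma pdiv (hna : IsNonarch abv) (B : Polynomial C) (ν : ℕ)
    (hdeg : B.degree ≤ (ν : ℕ)) (hν : 0 < abv (B.coeff ν))
    (hmax : ∀ i, abv (B.coeff i) ≤ abv (B.coeff ν)) :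
    ∀ (n : ℕ) (f : Polynomial C), (f = 0 ∨ f.natDegree < n) →
    ∀ K : ℝ, (∀ i, abv (f.coeff i) ≤ K) →
    ∃ q r : Polynomial C, f = q * B + r ∧ r.degree < (ν : WithBot ℕ) ∧
      (∀ i, abv (q.coeff i) * abv (B.coeff ν) ≤ K) ∧ (∀ i, abv (r.coeff i) ≤ K) := by
  intro n
  induction n with
  | zero =>
    intro f hf K hK
    have hf0 : f = 0 := hf.resolve_right (by omega)
    subst hf0
    have hK0 : 0 ≤ K := le_trans (abv.nonneg _) (hK 0)
    exact ⟨0, 0, by simp, by rw [Polynomial.degree_zero]; exact WithBot.bot_lt_coe _,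
      fun i => by simpa using hK0, fun i => by simpa using hK0⟩
  | succ n ih =>
    intro f hf K hK
    have hK0 : 0 ≤ K := le_trans (abv.nonneg _) (hK 0)
    by_cases hlt : f.degree < (ν : WithBot ℕ)
    · exact ⟨0, f, by simp, hlt, fun i => by simpa using hK0, hK⟩
    · push_neg at hlt
      have hf0 : f ≠ 0 := by
        rintro rfl
        rw [Polynomial.degree_zero] at hlt
        exact absurd hlt (by simp)
      have hνd : ν ≤ f.natDegree := by
        have := hlt.trans_eq (Polynomial.degree_eq_natDegree hf0)
        exact_mod_cast this
      set d := f.natDegree with hd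
      have hdn : d < n + 1 := hf.resolve_left hf0
      have hBν : B.coeff ν ≠ 0 := fun h => by simp [h] at hν
      set c := f.coeff d / B.coeff ν with hc
      set e := d - ν with he
      set t := Polynomial.C c * Polynomial.X ^ e with ht
      set f' := f - B * t with hf'
      have hBt : ∀ i, (B * t).coeff i = if e ≤ i then B.coeff (i - e) * c else 0 := by
        intro i
        rw [ht, ← mul_assoc, Polynomial.coeff_mul_X_pow']
        split
        · rw [Polynomial.coeff_mul_C]
        · rfl
      have habvc : abv c * abv (B.coeff ν) = abv (f.coeff d) := by
        rw [← map_mul, hc, div_mul_cancel₀ _ hBν]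
      have hterm : ∀ i, abv ((B * t).coeff i) ≤ K := by
        intro i
        rw [hBt i]
        split
        · calc abv (B.coeff (i - e) * c) = abv (B.coeff (i - e)) * abv c := map_mul _ _ _
            _ ≤ abv (B.coeff ν) * abv c :=
              mul_le_mul_of_nonneg_right (hmax _) (abv.nonneg c)
            _ = abv (f.coeff d) := by rw [mul_comm]; exact habvc
            _ ≤ K := hK d
        · simpa using hK0
      have hf'b : ∀ i, abv (f'.coeff i) ≤ K := fun i => by
        rw [hf', Polynomial.coeff_sub]
        exact le_trans (nonarch_sub abv hna _ _) (max_le (hK i) (hterm i))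
      have hcancel : f'.coeff d = 0 := by
        rw [hf', Polynomial.coeff_sub, hBt]
        rw [if_pos (show e ≤ d by omega), show d - e = ν by omega, hc, mul_comm,
          div_mul_cancel₀ _ hBν, sub_self]
      have hhigh : ∀ i, d < i → f'.coeff i = 0 := by
        intro i hi
        rw [hf', Polynomial.coeff_sub, Polynomial.coeff_eq_zero_of_natDegree_lt hi, hBt]
        have hB0 : ∀ j, ν < j → B.coeff j = 0 := fun j hj =>
          Polynomial.coeff_eq_zero_of_degree_lt (lt_of_le_of_lt hdeg (by exact_mod_cast hj))
        split
        · rw [hB0 (i - e) (by omega), zero_mul, sub_self]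
        · rw [sub_self]
      have hf'cases : f' = 0 ∨ f'.natDegree < n := by
        by_cases h0 : f' = 0
        · exact Or.inl h0
        · right
          have hdeg' : f'.degree < (d : WithBot ℕ) := by
            rw [Polynomial.degree_lt_iff_coeff_zero]
            intro i hi
            have : d ≤ i := by exact_mod_cast hi
            rcases eq_or_lt_of_le this with rfl | hlt'
            · exact hcancel
            · exact hhigh i hlt'
          have := (Polynomial.natDegree_lt_iff_degree_lt h0).2 hdeg'
          omega
      obtain ⟨q', r', hfq, hdr, hqb, hrb⟩ := ih f' hf'cases K hf'b
      refine ⟨q' + t, r', ?_, hdr, ?_, hrb⟩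
      · have h1 : f = f' + B * t := by rw [hf']; ring
        rw [h1, hfq]; ring
      · intro i
        have htco : abv (t.coeff i) * abv (B.coeff ν) ≤ K := by
          rw [ht, Polynomial.coeff_C_mul, Polynomial.coeff_X_pow]
          split
          · rw [mul_one]; rw [habvc]; exact hK d
          · simpa using hK0
        rw [Polynomial.coeff_add]
        calc abv (q'.coeff i + t.coeff i) * abv (B.coeff ν)
            ≤ max (abv (q'.coeff i)) (abv (t.coeff i)) * abv (B.coeff ν) :=
              mul_le_mul_of_nonneg_right (hna _ _) (abv.nonneg _)
          _ ≤ K := by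
              rcases max_cases (abv (q'.coeff i)) (abv (t.coeff i)) with ⟨h1, _⟩ | ⟨h1, _⟩ <;>
                rw [h1]
              · exact hqb i
              · exact htco

/-! ### Approximate Weierstrass division -/

lemma approx_div (hna : IsNonarch abv) (b₁ : PowerSeries C) (hb₁T : InTate abv b₁)
    (ν : ℕ) (M γ : ℝ) (hM : abv (PowerSeries.coeff ν b₁) = M) (hM0 : 0 < M)
    (hmaxall : ∀ i, abv (PowerSeries.coeff i b₁) ≤ M)
    (hγb : ∀ i, ν < i → abv (PowerSeries.coeff i b₁) ≤ γ) (hγM : γ < M) (hγ0 : 0 ≤ γ)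
    (η : ℝ) (hη : 0 < η) :
    ∀ (k : ℕ) (f : Polynomial C) (δ : ℝ), 0 ≤ δ → δ ≤ 1 → (∀ i, abv (f.coeff i) ≤ δ) →
    ∃ q r : Polynomial C, r.degree < (ν : WithBot ℕ) ∧
      ∀ j, abv (PowerSeries.coeff j
        ((f : PowerSeries C) - ((q : PowerSeries C) * b₁ + (r : PowerSeries C))))
        ≤ max η (δ * (γ / M) ^ k) := by
  have hMnn : (0:ℝ) ≤ M := le_of_lt hM0
  have hq1 : (0:ℝ) ≤ γ / M := div_nonneg hγ0 hMnn
  have hq2 : γ / M ≤ 1 := (div_le_one hM0).2 (le_of_lt hγM)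
  intro k
  induction k with
  | zero =>
    intro f δ hδ0 hδ1 hfb
    refine ⟨0, 0, by rw [Polynomial.degree_zero]; exact WithBot.bot_lt_coe _, fun j => ?_⟩
    have h1 : ((0 : Polynomial C) : PowerSeries C) = 0 := by push_cast; rfl
    rw [h1, zero_mul, add_zero, sub_zero, Polynomial.coeff_coe]
    calc abv (f.coeff j) ≤ δ := hfb j
      _ = δ * (γ / M) ^ 0 := by rw [pow_zero, mul_one]
      _ ≤ max η (δ * (γ / M) ^ 0) := le_max_right _ _
  | succ k ih =>
    intro f δ hδ0 hδ1 hfb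
    set B := PowerSeries.trunc (ν + 1) b₁ with hB
    have hBc : ∀ i, B.coeff i = if i < ν + 1 then PowerSeries.coeff i b₁ else 0 :=
      fun i => PowerSeries.coeff_trunc i _ b₁
    have hBν : B.coeff ν = PowerSeries.coeff ν b₁ := by rw [hBc, if_pos (by omega)]
    have hBdeg : B.degree ≤ (ν : ℕ) := by
      refine (Polynomial.degree_le_iff_coeff_zero _ _).2 fun m hm => ?_
      have h2 : ν < m := by exact_mod_cast hm
      rw [hBc, if_neg (by omega)]
    have hBν0 : 0 < abv (B.coeff ν) := by rw [hBν, hM]; exact hM0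
    have hBmax : ∀ i, abv (B.coeff i) ≤ abv (B.coeff ν) := by
      intro i
      rw [hBν, hM, hBc]
      split
      · exact hmaxall i
      · simpa using hMnn
    obtain ⟨q₀, r₀, hfq, hr₀d, hq₀b, hr₀b⟩ := pdiv abv hna B ν hBdeg hBν0 hBmax
      (f.natDegree + 1) f (Or.inr (by omega)) δ hfb
    rw [hBν, hM] at hq₀b
    have hq₀' : ∀ i, abv (q₀.coeff i) ≤ δ / M := fun i => (le_div_iff₀ hM0).2 (hq₀b i)
    set B' := b₁ - (B : PowerSeries C) with hB'
    have hB'c : ∀ j, PowerSeries.coeff j B' =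
        if j < ν + 1 then 0 else PowerSeries.coeff j b₁ := by
      intro j
      rw [hB', map_sub, Polynomial.coeff_coe, hBc]
      split
      · rw [sub_self]
      · rw [sub_zero]
    have hB'γ : ∀ j, abv (PowerSeries.coeff j B') ≤ γ := by
      intro j
      rw [hB'c]
      split
      · simpa using hγ0
      · exact hγb j (by omega)
    obtain ⟨Nt, hNt⟩ := (inTate_iff abv).1 hb₁T (η * M) (mul_pos hη hM0)
    set Bh := PowerSeries.trunc Nt B' with hBh
    set Bt := B' - (Bh : PowerSeries C) with hBt
    have hBhc : ∀ i, Bh.coeff i = if i < Nt then PowerSeries.coeff i B' else 0 :=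
      fun i => PowerSeries.coeff_trunc i _ B'
    have hBhγ : ∀ i, abv (Bh.coeff i) ≤ γ := by
      intro i
      rw [hBhc]
      split
      · exact hB'γ i
      · simpa using hγ0
    have hBtb : ∀ j, abv (PowerSeries.coeff j Bt) ≤ η * M := by
      intro j
      rw [hBt, map_sub, Polynomial.coeff_coe, hBhc]
      split
      · rw [sub_self]
        simpa using le_of_lt (mul_pos hη hM0)
      · rw [sub_zero, hB'c]
        split
        · simpa using le_of_lt (mul_pos hη hM0)
        · exact le_of_lt (hNt j (by omega))
    set fn := -(q₀ * Bh) with hfn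
    have hfnb : ∀ i, abv (fn.coeff i) ≤ δ * (γ / M) := by
      intro i
      rw [hfn, Polynomial.coeff_neg, abv.map_neg, Polynomial.coeff_mul]
      apply nonarch_sum_le abv hna _ _ _ (mul_nonneg hδ0 hq1)
      rintro ⟨i1, j1⟩ _
      rw [map_mul]
      calc abv (q₀.coeff i1) * abv (Bh.coeff j1) ≤ (δ / M) * γ :=
            mul_le_mul (hq₀' i1) (hBhγ j1) (abv.nonneg _) (div_nonneg hδ0 hMnn)
        _ = δ * (γ / M) := by ring
    obtain ⟨q', r', hr'd, hD'⟩ := ih fn (δ * (γ / M)) (mul_nonneg hδ0 hq1)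
      (by calc δ * (γ / M) ≤ 1 * 1 := mul_le_mul hδ1 hq2 hq1 one_pos.le
            _ = 1 := one_mul 1) hfnb
    refine ⟨q₀ + q', r₀ + r',
      lt_of_le_of_lt (Polynomial.degree_add_le _ _) (max_lt hr₀d hr'd), fun j => ?_⟩
    have hfc : (f : PowerSeries C) =
        (q₀ : PowerSeries C) * (B : PowerSeries C) + (r₀ : PowerSeries C) := by
      rw [hfq]; push_cast; ring
    have key : (f : PowerSeries C) -
        (((q₀ + q' : Polynomial C) : PowerSeries C) * b₁
          + ((r₀ + r' : Polynomial C) : PowerSeries C))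
        = ((fn : PowerSeries C) - ((q' : PowerSeries C) * b₁ + (r' : PowerSeries C)))
          + (-(q₀ : PowerSeries C) * Bt) := by
      have h2 : (fn : PowerSeries C) = -((q₀ : PowerSeries C) * (Bh : PowerSeries C)) := by
        rw [hfn]; push_cast; ring
      rw [hfc, h2, hBt, hB']
      push_cast
      ring
    rw [key, map_add]
    refine le_trans (hna _ _) (max_le ?_ ?_)
    · refine le_trans (hD' j) (max_le (le_max_left _ _) ?_)
      have h3 : δ * (γ / M) * (γ / M) ^ k = δ * (γ / M) ^ (k + 1) := by ring
      rw [h3]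
      exact le_max_right _ _
    · refine le_trans ?_ (le_max_left η _)
      rw [PowerSeries.coeff_mul]
      apply nonarch_sum_le abv hna _ _ _ (le_of_lt hη)
      rintro ⟨i1, j1⟩ _
      rw [map_mul]
      have e1 : abv (PowerSeries.coeff i1 (-(q₀ : PowerSeries C))) ≤ δ / M := by
        rw [map_neg, abv.map_neg, Polynomial.coeff_coe]
        exact hq₀' i1
      have hMne : M ≠ 0 := ne_of_gt hM0
      calc abv (PowerSeries.coeff i1 (-(q₀ : PowerSeries C)))
            * abv (PowerSeries.coeff j1 Bt)
          ≤ (δ / M) * (η * M) :=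
            mul_le_mul e1 (hBtb j1) (abv.nonneg _) (div_nonneg hδ0 hMnn)
        _ = δ * η := by field_simp
        _ ≤ 1 * η := mul_le_mul_of_nonneg_right hδ1 (le_of_lt hη)
        _ = η := one_mul η

/-! ### Key uniqueness-type estimate -/

lemma key_est (hna : IsNonarch abv) (b₁ : PowerSeries C) (ν : ℕ) (M : ℝ)
    (hM : abv (PowerSeries.coeff ν b₁) = M) (hM0 : 0 < M)
    (hmaxall : ∀ i, abv (PowerSeries.coeff i b₁) ≤ M)
    (hstrict : ∀ i, ν < i → abv (PowerSeries.coeff i b₁) < M)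
    (q r E : PowerSeries C) (hq : InTate abv q)
    (hr : ∀ j, ν ≤ j → PowerSeries.coeff j r = 0)
    (hE : q * b₁ + r = E) (KE : ℝ) (hKE : ∀ j, abv (PowerSeries.coeff j E) ≤ KE) :
    (∀ i, abv (PowerSeries.coeff i q) * M ≤ KE) ∧
    (∀ i, abv (PowerSeries.coeff i r) ≤ KE) := by
  have hKE0 : (0:ℝ) ≤ KE := le_trans (abv.nonneg _) (hKE 0)
  by_cases hq0 : q = 0
  · subst hq0
    rw [zero_mul, zero_add] at hE
    subst hE
    exact ⟨fun i => by simpa using hKE0, hKE⟩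
  · have hex : ∃ j, PowerSeries.coeff j q ≠ 0 := by
      by_contra h
      push_neg at h
      exact hq0 (PowerSeries.ext fun n => by simp [h n])
    obtain ⟨j₀, hj₀⟩ := hex
    obtain ⟨i₀, hpos, hall, hlast⟩ := exists_last_max (fun i => abv (PowerSeries.coeff i q))
      ⟨j₀, abv.pos hj₀⟩ (fun ε hε => (inTate_iff abv).1 hq ε hε)
    set u := fun i => abv (PowerSeries.coeff i q) with hu
    -- the sum at index i₀ + ν
    have hmem : (i₀, ν) ∈ Finset.HasAntidiagonal.antidiagonal (i₀ + ν) := by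
      rw [Finset.HasAntidiagonal.mem_antidiagonal]
    have hsum : PowerSeries.coeff (i₀ + ν) E
        = PowerSeries.coeff i₀ q * PowerSeries.coeff ν b₁
          + ∑ ij ∈ (Finset.HasAntidiagonal.antidiagonal (i₀ + ν)).erase (i₀, ν),
              PowerSeries.coeff ij.1 q * PowerSeries.coeff ij.2 b₁ := by
      rw [← hE, map_add, hr _ (by omega), add_zero, PowerSeries.coeff_mul,
        ← Finset.add_sum_erase _ _ hmem]
    have hrest : abv (∑ ij ∈ (Finset.HasAntidiagonal.antidiagonal (i₀ + ν)).erase (i₀, ν),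
        PowerSeries.coeff ij.1 q * PowerSeries.coeff ij.2 b₁) < u i₀ * M := by
      apply nonarch_sum_lt abv hna _ _ _ (mul_pos hpos hM0)
      rintro ⟨i1, j1⟩ hij
      rw [Finset.mem_erase, Finset.HasAntidiagonal.mem_antidiagonal] at hij
      obtain ⟨hne, hij⟩ := hij
      rw [map_mul]
      rcases lt_trichotomy i1 i₀ with h | h | h
      · have hj1 : ν < j1 := by omega
        calc u i1 * abv (PowerSeries.coeff j1 b₁)
            ≤ u i₀ * abv (PowerSeries.coeff j1 b₁) :=
              mul_le_mul_of_nonneg_right (hall i1) (abv.nonneg _)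
          _ < u i₀ * M := mul_lt_mul_of_pos_left (hstrict j1 hj1) hpos
      · exfalso; apply hne; simp [h]; omega
      · calc u i1 * abv (PowerSeries.coeff j1 b₁)
            ≤ u i1 * M := mul_le_mul_of_nonneg_left (hmaxall j1) (abv.nonneg _)
          _ < u i₀ * M := mul_lt_mul_of_pos_right (hlast i1 h) hM0
    have hdom : u i₀ * M ≤ abv (PowerSeries.coeff (i₀ + ν) E) := by
      rw [hsum]
      have h1 : abv (PowerSeries.coeff i₀ q * PowerSeries.coeff ν b₁) = u i₀ * M := by
        rw [map_mul, hM]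
      rw [← h1]
      apply nonarch_add_dominant abv hna
      rw [h1]
      exact hrest
    have hqKE : u i₀ * M ≤ KE := le_trans hdom (hKE _)
    constructor
    · intro i
      calc abv (PowerSeries.coeff i q) * M ≤ u i₀ * M :=
          mul_le_mul_of_nonneg_right (hall i) (le_of_lt hM0)
        _ ≤ KE := hqKE
    · intro j
      have h2 : PowerSeries.coeff j r
          = PowerSeries.coeff j E - PowerSeries.coeff j (q * b₁) := by
        rw [← hE, map_add]; ring
      rw [h2]
      refine le_trans (nonarch_sub abv hna _ _) (max_le (hKE j) ?_)
      rw [PowerSeries.coeff_mul]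
      apply nonarch_sum_le abv hna _ _ _ hKE0
      rintro ⟨i1, j1⟩ _
      rw [map_mul]
      calc abv (PowerSeries.coeff i1 q) * abv (PowerSeries.coeff j1 b₁)
          ≤ u i₀ * M :=
            mul_le_mul (hall i1) (hmaxall j1) (abv.nonneg _) (le_of_lt hpos)
        _ ≤ KE := hqKE

/-! ### Existence of a polynomial multiple of a Tate series -/

lemma exists_poly_mul (hna : IsNonarch abv) (hcomplete : AbvComplete abv)
    (b₁ : PowerSeries C) (hT : InTate abv b₁) (hb0 : b₁ ≠ 0) :
    ∃ (P : Polynomial C) (w : PowerSeries C), P ≠ 0 ∧ InTate abv w ∧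
      (P : PowerSeries C) = w * b₁ := by
  classical
  have hex : ∃ j, PowerSeries.coeff j b₁ ≠ 0 := by
    by_contra h
    push_neg at h
    exact hb0 (PowerSeries.ext fun n => by simp [h n])
  obtain ⟨j₀, hj₀⟩ := hex
  obtain ⟨ν, hpos0, hall0, hlast0⟩ := exists_last_max (fun i => abv (PowerSeries.coeff i b₁))
    ⟨j₀, abv.pos hj₀⟩ (fun ε hε => (inTate_iff abv).1 hT ε hε)
  have hM0 : 0 < abv (PowerSeries.coeff ν b₁) := hpos0
  have hall : ∀ i, abv (PowerSeries.coeff i b₁) ≤ abv (PowerSeries.coeff ν b₁) := hall0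
  have hlast : ∀ i, ν < i →
      abv (PowerSeries.coeff i b₁) < abv (PowerSeries.coeff ν b₁) := hlast0
  -- a uniform bound γ for the tail coefficients
  have hγex : ∃ γ : ℝ, 0 ≤ γ ∧ γ < abv (PowerSeries.coeff ν b₁) ∧
      ∀ i, ν < i → abv (PowerSeries.coeff i b₁) ≤ γ := by
    by_cases hz : ∀ i, ν < i → PowerSeries.coeff i b₁ = 0
    · exact ⟨0, le_refl 0, hM0, fun i hi => by rw [hz i hi]; simp⟩
    · push_neg at hz
      obtain ⟨i1, hi1, hi1ne⟩ := hz
      obtain ⟨js, hpos', hall', _⟩ := exists_last_max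
        (fun j => abv (PowerSeries.coeff (ν + 1 + j) b₁))
        ⟨i1 - ν - 1, by
          show 0 < abv (PowerSeries.coeff (ν + 1 + (i1 - ν - 1)) b₁)
          rw [show ν + 1 + (i1 - ν - 1) = i1 by omega]
          exact abv.pos hi1ne⟩
        (fun ε hε => by
          obtain ⟨N, hN⟩ := (inTate_iff abv).1 hT ε hε
          exact ⟨N, fun n hn => hN (ν + 1 + n) (by omega)⟩)
      refine ⟨abv (PowerSeries.coeff (ν + 1 + js) b₁), abv.nonneg _,
        hlast _ (by omega), fun i hi => ?_⟩
      have h2 := hall' (i - ν - 1)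
      rwa [show ν + 1 + (i - ν - 1) = i by omega] at h2
  obtain ⟨γ, hγ0, hγM, hγb⟩ := hγex
  -- the approximating divisions
  have hap : ∀ n : ℕ, ∃ q r : Polynomial C, r.degree < (ν : WithBot ℕ) ∧
      ∀ j, abv (PowerSeries.coeff j
        (((Polynomial.X ^ ν : Polynomial C) : PowerSeries C)
          - ((q : PowerSeries C) * b₁ + (r : PowerSeries C)))) ≤ 1 / (n + 1) := by
    intro n
    have hεn : (0:ℝ) < 1 / (n + 1) := by positivity
    obtain ⟨k, hk⟩ := exists_pow_lt_of_lt_one hεn ((div_lt_one hM0).2 hγM)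
    obtain ⟨q, r, hrdg, hbd⟩ := approx_div abv hna b₁ hT ν
      (abv (PowerSeries.coeff ν b₁)) γ rfl hM0 hall hγb hγM hγ0
      (1 / (n + 1)) hεn k (Polynomial.X ^ ν) 1 zero_le_one le_rfl
      (fun i => by
        rw [Polynomial.coeff_X_pow]
        split
        · rw [abv.map_one]
        · simpa using zero_le_one)
    refine ⟨q, r, hrdg, fun j => le_trans (hbd j) (max_le le_rfl ?_)⟩
    rw [one_mul]
    exact le_of_lt hk
  choose qf rf hrd hD using hap
  -- Cauchy estimates
  have hkey : ∀ n m : ℕ,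
      (∀ i, abv ((qf n).coeff i - (qf m).coeff i) * abv (PowerSeries.coeff ν b₁)
        ≤ max (1 / ((n:ℝ) + 1)) (1 / ((m:ℝ) + 1))) ∧
      (∀ i, abv ((rf n).coeff i - (rf m).coeff i)
        ≤ max (1 / ((n:ℝ) + 1)) (1 / ((m:ℝ) + 1))) := by
    intro n m
    have hE : ((qf n - qf m : Polynomial C) : PowerSeries C) * b₁
        + ((rf n - rf m : Polynomial C) : PowerSeries C)
        = (((Polynomial.X ^ ν : Polynomial C) : PowerSeries C)
            - ((qf m : PowerSeries C) * b₁ + (rf m : PowerSeries C)))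
          - (((Polynomial.X ^ ν : Polynomial C) : PowerSeries C)
            - ((qf n : PowerSeries C) * b₁ + (rf n : PowerSeries C))) := by
      push_cast
      ring
    have hrz : ∀ j, ν ≤ j →
        PowerSeries.coeff j ((rf n - rf m : Polynomial C) : PowerSeries C) = 0 := by
      intro j hj
      rw [Polynomial.coeff_coe]
      apply Polynomial.coeff_eq_zero_of_degree_lt
      exact lt_of_lt_of_le (lt_of_le_of_lt (Polynomial.degree_sub_le _ _)
        (max_lt (hrd n) (hrd m))) (by exact_mod_cast hj)
    have hKEb : ∀ j, abv (PowerSeries.coeff j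
        ((((Polynomial.X ^ ν : Polynomial C) : PowerSeries C)
            - ((qf m : PowerSeries C) * b₁ + (rf m : PowerSeries C)))
          - (((Polynomial.X ^ ν : Polynomial C) : PowerSeries C)
            - ((qf n : PowerSeries C) * b₁ + (rf n : PowerSeries C)))))
        ≤ max (1 / ((n:ℝ) + 1)) (1 / ((m:ℝ) + 1)) := by
      intro j
      rw [map_sub]
      refine le_trans (nonarch_sub abv hna _ _) (max_le ?_ ?_)
      · exact le_trans (hD m j) (le_max_right _ _)
      · exact le_trans (hD n j) (le_max_left _ _)
    have h1 := key_est abv hna b₁ ν (abv (PowerSeries.coeff ν b₁)) rfl hM0 hall hlast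
      ((qf n - qf m : Polynomial C) : PowerSeries C)
      ((rf n - rf m : Polynomial C) : PowerSeries C) _
      (inTate_coe abv _) hrz hE _ hKEb
    constructor
    · intro i
      have h2 := h1.1 i
      rwa [Polynomial.coeff_coe, Polynomial.coeff_sub] at h2
    · intro i
      have h2 := h1.2 i
      rwa [Polynomial.coeff_coe, Polynomial.coeff_sub] at h2
  -- coefficientwise limits
  have hcq : ∀ i : ℕ, ∃ x, TendstoAbv abv (fun n => (qf n).coeff i) x := by
    intro i
    apply hcomplete
    intro ε hε
    obtain ⟨N, hN⟩ := exists_nat_one_div_lt (mul_pos hε hM0)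
    refine ⟨N, fun m hm n hn => ?_⟩
    have h1 := (hkey m n).1 i
    have h2 : max (1 / ((m:ℝ) + 1)) (1 / ((n:ℝ) + 1)) ≤ 1 / ((N:ℝ) + 1) := by
      apply max_le
      · apply one_div_le_one_div_of_le (by positivity)
        exact_mod_cast Nat.succ_le_succ hm
      · apply one_div_le_one_div_of_le (by positivity)
        exact_mod_cast Nat.succ_le_succ hn
    have h3 := lt_of_le_of_lt (le_trans h1 h2) hN
    exact (mul_lt_mul_iff_left₀ hM0).1 h3
  choose κ hκ using hcq
  have hcr : ∀ j : ℕ, ∃ x, TendstoAbv abv (fun n => (rf n).coeff j) x := by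
    intro j
    apply hcomplete
    intro ε hε
    obtain ⟨N, hN⟩ := exists_nat_one_div_lt hε
    refine ⟨N, fun m hm n hn => ?_⟩
    have h1 := (hkey m n).2 j
    have h2 : max (1 / ((m:ℝ) + 1)) (1 / ((n:ℝ) + 1)) ≤ 1 / ((N:ℝ) + 1) := by
      apply max_le
      · apply one_div_le_one_div_of_le (by positivity)
        exact_mod_cast Nat.succ_le_succ hm
      · apply one_div_le_one_div_of_le (by positivity)
        exact_mod_cast Nat.succ_le_succ hn
    exact lt_of_le_of_lt (le_trans h1 h2) hN
  choose ρ hρ using hcr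
  -- the limit q is Tate
  have hqlim : ∀ (n i : ℕ), abv (κ i - (qf n).coeff i)
      ≤ 1 / (n + 1) / abv (PowerSeries.coeff ν b₁) := by
    intro n i
    refine tendstoAbv_sub_le abv (hκ i) (N := n) fun m hm => ?_
    have h1 := (hkey m n).1 i
    have h2 : max (1 / ((m:ℝ) + 1)) (1 / ((n:ℝ) + 1)) = 1 / ((n:ℝ) + 1) := by
      apply max_eq_right
      apply one_div_le_one_div_of_le (by positivity)
      exact_mod_cast Nat.succ_le_succ hm
    rw [h2] at h1
    exact (le_div_iff₀ hM0).2 h1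
  have hqsT : InTate abv (PowerSeries.mk κ) := by
    rw [inTate_iff]
    intro ε hε
    obtain ⟨n, hn⟩ := exists_nat_one_div_lt (mul_pos hε hM0)
    refine ⟨(qf n).natDegree + 1, fun i hi => ?_⟩
    have h0 : (qf n).coeff i = 0 := Polynomial.coeff_eq_zero_of_natDegree_lt (by omega)
    have h1 := hqlim n i
    rw [h0, sub_zero] at h1
    rw [PowerSeries.coeff_mk]
    calc abv (κ i) ≤ 1 / (n + 1) / abv (PowerSeries.coeff ν b₁) := h1
      _ < ε := by
        rw [div_lt_iff₀ hM0]
        exact hn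
  -- high coefficients of the limit remainder vanish
  have hρ0 : ∀ j, ν ≤ j → ρ j = 0 := by
    intro j hj
    have hzero : ∀ n, (rf n).coeff j = 0 := fun n =>
      Polynomial.coeff_eq_zero_of_degree_lt
        (lt_of_lt_of_le (hrd n) (by exact_mod_cast hj))
    have h2 : TendstoAbv abv (fun n => (rf n).coeff j) 0 := by
      have h3 := tendstoAbv_const abv (0 : C)
      have h4 : (fun _ : ℕ => (0:C)) = fun n => (rf n).coeff j :=
        funext fun n => (hzero n).symm
      rwa [h4] at h3
    exact tendstoAbv_unique abv (hρ j) h2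
  -- the limit identity
  have hid : ((Polynomial.X ^ ν : Polynomial C) : PowerSeries C)
      = PowerSeries.mk κ * b₁ + PowerSeries.mk ρ := by
    apply PowerSeries.ext
    intro j
    have lim1 : TendstoAbv abv
        (fun n => PowerSeries.coeff j
          ((qf n : PowerSeries C) * b₁ + (rf n : PowerSeries C)))
        (PowerSeries.coeff j ((Polynomial.X ^ ν : Polynomial C) : PowerSeries C)) := by
      intro ε hε
      obtain ⟨N, hN⟩ := exists_nat_one_div_lt hε
      refine ⟨N, fun n hn => ?_⟩
      have e1 : PowerSeries.coeff j ((qf n : PowerSeries C) * b₁ + (rf n : PowerSeries C))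
          - PowerSeries.coeff j ((Polynomial.X ^ ν : Polynomial C) : PowerSeries C)
          = -(PowerSeries.coeff j
            (((Polynomial.X ^ ν : Polynomial C) : PowerSeries C)
              - ((qf n : PowerSeries C) * b₁ + (rf n : PowerSeries C)))) := by
        rw [map_sub]
        ring
      rw [e1, abv.map_neg]
      refine lt_of_le_of_lt (le_trans (hD n j) ?_) hN
      apply one_div_le_one_div_of_le (by positivity)
      exact_mod_cast Nat.succ_le_succ hn
    have lim2 : TendstoAbv abv
        (fun n => PowerSeries.coeff j
          ((qf n : PowerSeries C) * b₁ + (rf n : PowerSeries C)))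
        (PowerSeries.coeff j (PowerSeries.mk κ * b₁ + PowerSeries.mk ρ)) := by
      have l3 := tendstoAbv_add abv
        (tendstoAbv_sum abv (Finset.HasAntidiagonal.antidiagonal j)
          (fun ij n => (qf n).coeff ij.1 * PowerSeries.coeff ij.2 b₁)
          (fun ij => κ ij.1 * PowerSeries.coeff ij.2 b₁)
          (fun ij _ => tendstoAbv_mul_const abv (hκ ij.1) _))
        (hρ j)
      have efun : (fun n => (∑ ij ∈ Finset.HasAntidiagonal.antidiagonal j,
            (qf n).coeff ij.1 * PowerSeries.coeff ij.2 b₁) + (rf n).coeff j)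
          = fun n => PowerSeries.coeff j
            ((qf n : PowerSeries C) * b₁ + (rf n : PowerSeries C)) := by
        funext n
        rw [map_add, PowerSeries.coeff_mul, Polynomial.coeff_coe]
        congr 1
        apply Finset.sum_congr rfl
        intro ij _
        rw [Polynomial.coeff_coe]
      have eval : (∑ ij ∈ Finset.HasAntidiagonal.antidiagonal j,
            κ ij.1 * PowerSeries.coeff ij.2 b₁) + ρ j
          = PowerSeries.coeff j (PowerSeries.mk κ * b₁ + PowerSeries.mk ρ) := by
        rw [map_add, PowerSeries.coeff_mul, PowerSeries.coeff_mk]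
        congr 1
        apply Finset.sum_congr rfl
        intro ij _
        rw [PowerSeries.coeff_mk]
      rw [efun, eval] at l3
      exact l3
    exact tendstoAbv_unique abv lim1 lim2
  -- assemble P
  set rP : Polynomial C := ∑ i ∈ Finset.range ν, Polynomial.C (ρ i) * Polynomial.X ^ i
    with hrP
  have hrPc : (rP : PowerSeries C) = PowerSeries.mk ρ := by
    apply PowerSeries.ext
    intro j
    rw [Polynomial.coeff_coe, PowerSeries.coeff_mk, hrP, Polynomial.finset_sum_coeff]
    simp only [Polynomial.coeff_C_mul, Polynomial.coeff_X_pow, mul_ite, mul_one, mul_zero]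
    rw [Finset.sum_ite_eq (Finset.range ν) j ρ]
    split
    · rfl
    · rename_i hj
      rw [Finset.mem_range] at hj
      exact (hρ0 j (by omega)).symm
  refine ⟨Polynomial.X ^ ν - rP, PowerSeries.mk κ, ?_, hqsT, ?_⟩
  · intro h
    have h1 : (Polynomial.X ^ ν - rP).coeff ν = 1 := by
      have h2 : rP.coeff ν = ρ ν := by
        rw [← Polynomial.coeff_coe, hrPc, PowerSeries.coeff_mk]
      rw [Polynomial.coeff_sub, Polynomial.coeff_X_pow, if_pos rfl, h2,
        hρ0 ν le_rfl, sub_zero]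
    rw [h] at h1
    simp at h1
  · have h3 : ((Polynomial.X ^ ν - rP : Polynomial C) : PowerSeries C)
        = ((Polynomial.X ^ ν : Polynomial C) : PowerSeries C) - (rP : PowerSeries C) := by
      push_cast
      ring
    rw [h3, hrPc, hid]
    ring

end Aux
/-- The `(-l)`-fold twist is a ring automorphism of the Tate
algebra `𝕋` (it is injective and maps `𝕋` onto `𝕋`), and its unique extension to the
fraction field `L` has fixed field `𝔽_q(t)`: if `f = a/b ∈ L` (`a, b ∈ 𝕋`, `b ≠ 0`)
satisfies `f^{(-l)} = f`, then `f = g/h` is a rational function in `t` with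
coefficients in the finite field `𝔽_q ⊆ C_∞`. -/
theorem twist_automorphism_fixed_field
    (C : Type) [Field C] (p : ℕ) [Fact p.Prime] [CharP C p] [PerfectRing C p]
    [IsAlgClosed C] (abv : AbsoluteValue C ℝ) (θ : C)
    (hna : IsNonarch abv) (hcomplete : AbvComplete abv) (habsθ : abv θ = p)
    (l : ℕ) (hl : 0 < l) :
    (∀ f : PowerSeries C, InTate abv f → InTate abv (twistPS p (-(l : ℤ)) f)) ∧
    Function.Injective (twistPS p (-(l : ℤ)) : PowerSeries C → PowerSeries C) ∧
    (∀ g : PowerSeries C, InTate abv g →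
      ∃ f : PowerSeries C, InTate abv f ∧ twistPS p (-(l : ℤ)) f = g) ∧
    (∀ a b : PowerSeries C, InTate abv a → InTate abv b → b ≠ 0 →
      twistPS p (-(l : ℤ)) a * b = a * twistPS p (-(l : ℤ)) b →
      ∃ g h : Polynomial C, CoeffsIn (Fq C p l) g ∧ CoeffsIn (Fq C p l) h ∧ h ≠ 0 ∧
        a * (h : PowerSeries C) = b * (g : PowerSeries C)) := by
  classical
  have hk1 : 1 ≤ p ^ l := Nat.one_le_pow _ _ (Nat.Prime.pos Fact.out)
  refine ⟨?_, ?_, ?_, ?_⟩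
  · -- the inverse twist preserves the Tate algebra
    intro f hf
    rw [inTate_iff] at hf ⊢
    intro ε hε
    obtain ⟨N, hN⟩ := hf (ε ^ p ^ l) (pow_pos hε _)
    refine ⟨N, fun n hn => ?_⟩
    rw [coeff_twistPS]
    have h2 := abv_twist_pow abv p l (PowerSeries.coeff n f)
    have h3 : abv (twistHom p (-(l : ℤ)) (PowerSeries.coeff n f)) ^ p ^ l
        < ε ^ p ^ l := by
      rw [h2]; exact hN n hn
    exact lt_of_pow_lt_pow_left₀ _ (le_of_lt hε) h3
  · -- injectivity
    intro x y hxy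
    apply PowerSeries.ext
    intro n
    have h1 := congrArg (PowerSeries.coeff n) hxy
    rw [coeff_twistPS, coeff_twistPS] at h1
    exact twistHom_injective p _ h1
  · -- surjectivity onto the Tate algebra
    intro g hg
    refine ⟨twistPS p (l : ℤ) g, ?_, ?_⟩
    · rw [inTate_iff] at hg ⊢
      intro ε hε
      obtain ⟨N, hN⟩ := hg (min ε 1) (lt_min hε one_pos)
      refine ⟨N, fun n hn => ?_⟩
      rw [coeff_twistPS]
      have h1 : abv (twistHom p (l : ℤ) (PowerSeries.coeff n g))
          = abv (PowerSeries.coeff n g) ^ p ^ l := by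
        rw [twistHom_nat, map_pow]
      rw [h1]
      have h2 := hN n hn
      calc abv (PowerSeries.coeff n g) ^ p ^ l
          ≤ abv (PowerSeries.coeff n g) ^ 1 :=
            pow_le_pow_of_le_one (abv.nonneg _)
              (le_of_lt (lt_of_lt_of_le h2 (min_le_right _ _))) hk1
        _ = abv (PowerSeries.coeff n g) := pow_one _
        _ < ε := lt_of_lt_of_le h2 (min_le_left _ _)
    · apply PowerSeries.ext
      intro n
      rw [coeff_twistPS, coeff_twistPS, twistHom_twistHom,
        show -(l : ℤ) + (l : ℤ) = 0 by ring, twistHom_zero_apply]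
  · -- the fixed field of the twist is `𝔽_q(t)`
    intro a b ha hb hb0 heq
    by_cases ha0 : a = 0
    · refine ⟨0, 1, ?_, ?_, one_ne_zero, ?_⟩
      · intro i
        rw [Polynomial.coeff_zero]
        exact zero_mem _
      · intro i
        rw [Polynomial.coeff_one]
        split
        · exact one_mem _
        · exact zero_mem _
      · rw [ha0]; push_cast; ring
    -- decompose b
    have hex : ∃ n, PowerSeries.coeff n b ≠ 0 := by
      by_contra h
      push_neg at h
      exact hb0 (PowerSeries.ext fun n => by simp [h n])
    set m := Nat.find hex with hm
    set b₁ := PowerSeries.mk (fun n => PowerSeries.coeff (m + n) b) with hb₁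
    have hb₁c : PowerSeries.constantCoeff b₁ ≠ 0 := by
      have h1 : PowerSeries.coeff 0 b₁ = PowerSeries.coeff m b := by
        rw [hb₁, PowerSeries.coeff_mk, add_zero]
      rw [← PowerSeries.coeff_zero_eq_constantCoeff, h1]
      exact Nat.find_spec hex
    have hbdec : b = b₁ * PowerSeries.X ^ m := by
      apply PowerSeries.ext
      intro n
      rw [PowerSeries.coeff_mul_X_pow']
      split
      · rename_i h
        rw [hb₁, PowerSeries.coeff_mk, show m + (n - m) = n by omega]
      · rename_i h
        exact not_not.mp (Nat.find_min hex (by omega))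
    have hb₁T : InTate abv b₁ := inTate_shift abv m hb b₁
      (fun n => by rw [hb₁, PowerSeries.coeff_mk, add_comm])
    have hb₁0 : b₁ ≠ 0 := fun h => hb₁c (by rw [h]; simp)
    -- the fixed quotient F = a / b₁
    set F := a * b₁⁻¹ with hF
    have hFb : F * b₁ = a := by
      rw [hF, mul_assoc, mul_comm b₁⁻¹ b₁,
        PowerSeries.mul_inv_cancel b₁ hb₁c, mul_one]

    have hτX : twistPS p (-(l : ℤ)) (PowerSeries.X : PowerSeries C) = PowerSeries.X := by
      show PowerSeries.map (twistHom p (-(l : ℤ))) (PowerSeries.X : PowerSeries C)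
        = PowerSeries.X
      exact PowerSeries.map_X (twistHom p (-(l : ℤ)))
    have heq2 : twistPS p (-(l : ℤ)) a * b₁ = a * twistPS p (-(l : ℤ)) b₁ := by
      have h4 : twistPS p (-(l : ℤ)) b = twistPS p (-(l : ℤ)) b₁ * PowerSeries.X ^ m := by
        rw [hbdec, map_mul, map_pow, hτX]
      have h3 : (twistPS p (-(l : ℤ)) a * b₁) * PowerSeries.X ^ m
          = (a * twistPS p (-(l : ℤ)) b₁) * PowerSeries.X ^ m := by
        calc (twistPS p (-(l : ℤ)) a * b₁) * PowerSeries.X ^ m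
            = twistPS p (-(l : ℤ)) a * b := by rw [hbdec]; ring
          _ = a * twistPS p (-(l : ℤ)) b := heq
          _ = (a * twistPS p (-(l : ℤ)) b₁) * PowerSeries.X ^ m := by rw [h4]; ring
      exact mul_right_cancel₀ (pow_ne_zero m PowerSeries.X_ne_zero) h3
    have hτb₁0 : twistPS p (-(l : ℤ)) b₁ ≠ 0 := by
      intro h
      apply hb₁0
      apply PowerSeries.ext
      intro n
      have h1 := congrArg (PowerSeries.coeff n) h
      rw [coeff_twistPS] at h1
      simp only [map_zero] at h1
      have h2 : twistHom p (-(l : ℤ)) (PowerSeries.coeff n b₁)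
          = twistHom p (-(l : ℤ)) 0 := by rw [map_zero]; exact h1
      rw [map_zero]
      exact twistHom_injective p _ h2
    have hτF : twistPS p (-(l : ℤ)) F = F := by
      have h1 : twistPS p (-(l : ℤ)) F * twistPS p (-(l : ℤ)) b₁
          = twistPS p (-(l : ℤ)) a := by rw [← map_mul, hFb]
      have h2 : twistPS p (-(l : ℤ)) F * (twistPS p (-(l : ℤ)) b₁ * b₁)
          = F * (twistPS p (-(l : ℤ)) b₁ * b₁) := by
        calc twistPS p (-(l : ℤ)) F * (twistPS p (-(l : ℤ)) b₁ * b₁)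
            = (twistPS p (-(l : ℤ)) F * twistPS p (-(l : ℤ)) b₁) * b₁ := by ring
          _ = twistPS p (-(l : ℤ)) a * b₁ := by rw [h1]
          _ = a * twistPS p (-(l : ℤ)) b₁ := heq2
          _ = (F * b₁) * twistPS p (-(l : ℤ)) b₁ := by rw [hFb]
          _ = F * (twistPS p (-(l : ℤ)) b₁ * b₁) := by ring
      exact mul_right_cancel₀ (mul_ne_zero hτb₁0 hb₁0) h2
    have hc : ∀ n, PowerSeries.coeff n F ∈ Fq C p l := by
      intro n
      apply mem_Fq_of_fixed p l
      have h1 := congrArg (PowerSeries.coeff n) hτF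
      rwa [coeff_twistPS] at h1
    -- a polynomial multiple of b₁
    obtain ⟨P, w, hP0, hwT, hPw⟩ := exists_poly_mul abv hna hcomplete b₁ hb₁T hb₁0
    have hFP : InTate abv (F * (P : PowerSeries C)) := by
      have h1 : F * (P : PowerSeries C) = a * w := by rw [hPw, ← hFb]; ring
      rw [h1]
      exact inTate_mul abv hna ha hwT
    -- trailing coefficient of P
    have hsx : ∃ s, P.coeff s ≠ 0 :=
      ⟨P.natDegree, fun h => hP0 (Polynomial.leadingCoeff_eq_zero.1 h)⟩
    set s := Nat.find hsx with hs
    have hlam0 : P.coeff s ≠ 0 := Nat.find_spec hsx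
    have hlow : ∀ i, i < s → P.coeff i = 0 := fun i hi => not_not.mp (Nat.find_min hsx hi)
    have hsd : s ≤ P.natDegree := Polynomial.le_natDegree_of_ne_zero hlam0
    set d := P.natDegree - s with hd
    -- the linear recurrence sums
    have hsum : ∀ n, d ≤ n → PowerSeries.coeff (n + s) (F * (P : PowerSeries C))
        = ∑ i ∈ Finset.range (d + 1),
            P.coeff (s + i) * PowerSeries.coeff (n - i) F := by
      intro n hn
      rw [show F * (P : PowerSeries C) = (P : PowerSeries C) * F from mul_comm _ _,
        PowerSeries.coeff_mul,
        Finset.Nat.sum_antidiagonal_eq_sum_range_succ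
          (fun i k => PowerSeries.coeff i (P : PowerSeries C) * PowerSeries.coeff k F)]
      have hsub : Finset.Ico s (s + d + 1) ⊆ Finset.range (n + s + 1) := by
        intro i hi
        rw [Finset.mem_Ico] at hi
        rw [Finset.mem_range]
        omega
      have hvan : ∀ i ∈ Finset.range (n + s + 1), i ∉ Finset.Ico s (s + d + 1) →
          PowerSeries.coeff i (P : PowerSeries C) * PowerSeries.coeff (n + s - i) F
            = 0 := by
        intro i _ hi
        rw [Finset.mem_Ico] at hi
        push_neg at hi
        rw [Polynomial.coeff_coe]
        rcases lt_or_ge i s with h | h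
        · rw [hlow i h, zero_mul]
        · have h2 : P.natDegree < i := by omega
          rw [Polynomial.coeff_eq_zero_of_natDegree_lt h2, zero_mul]
      rw [← Finset.sum_subset hsub hvan, Finset.sum_Ico_eq_sum_range,
        show s + d + 1 - s = d + 1 by omega]
      apply Finset.sum_congr rfl
      intro i hi
      rw [Finset.mem_range] at hi
      rw [Polynomial.coeff_coe, show n + s - (s + i) = n - i by omega]
    -- the finite set of values
    letI : Fintype (Fq C p l) := fqFintype C p l hl
    set V : Finset C := Finset.image
      (fun v : Fin (d + 1) → Fq C p l => ∑ i : Fin (d + 1), P.coeff (s + i) * (v i : C))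
      Finset.univ with hV
    have hmemV : ∀ n, d ≤ n →
        (∑ i ∈ Finset.range (d + 1),
          P.coeff (s + i) * PowerSeries.coeff (n - i) F) ∈ V := by
      intro n hn
      rw [hV]
      apply Finset.mem_image.2
      refine ⟨fun i => ⟨PowerSeries.coeff (n - i) F, hc _⟩, Finset.mem_univ _, ?_⟩
      exact Fin.sum_univ_eq_sum_range
        (fun i => P.coeff (s + i) * PowerSeries.coeff (n - i) F) (d + 1)
    set W := (V.erase 0).image (fun x => abv x) with hW
    have hδex : ∃ δ : ℝ, 0 < δ ∧ ∀ x ∈ V, abv x < δ → x = 0 := by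
      by_cases hWne : W.Nonempty
      · have hWpos : ∀ x ∈ W, 0 < x := by
          intro x hx
          rw [hW, Finset.mem_image] at hx
          obtain ⟨y, hy, hy2⟩ := hx
          rw [Finset.mem_erase] at hy
          rw [← hy2]
          exact abv.pos hy.1
        refine ⟨W.min' hWne, hWpos _ (W.min'_mem hWne), ?_⟩
        · intro x hx hlt
          by_contra hx0
          have hxW : abv x ∈ W :=
            Finset.mem_image.2 ⟨x, Finset.mem_erase.2 ⟨hx0, hx⟩, rfl⟩
          exact absurd hlt (not_lt.2 (W.min'_le _ hxW))
      · refine ⟨1, one_pos, fun x hx _ => ?_⟩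
        by_contra hx0
        exact hWne ⟨abv x, Finset.mem_image.2 ⟨x, Finset.mem_erase.2 ⟨hx0, hx⟩, rfl⟩⟩
    obtain ⟨δ, hδ0, hδ⟩ := hδex
    obtain ⟨N₀, hN₀⟩ := (inTate_iff abv).1 hFP δ hδ0
    set N₁ := max N₀ d with hN₁
    have hrec : ∀ n, N₁ ≤ n →
        ∑ i ∈ Finset.range (d + 1),
          P.coeff (s + i) * PowerSeries.coeff (n - i) F = 0 := by
      intro n hn
      have hnd : d ≤ n := le_trans (le_max_right _ _) hn
      have hn0 : N₀ ≤ n := le_trans (le_max_left _ _) hn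
      apply hδ _ (hmemV n hnd)
      rw [← hsum n hnd]
      exact hN₀ (n + s) (by omega)
    have hdet : ∀ n n', N₁ ≤ n → N₁ ≤ n' →
        (∀ i, 1 ≤ i → i ≤ d →
          PowerSeries.coeff (n - i) F = PowerSeries.coeff (n' - i) F) →
        PowerSeries.coeff n F = PowerSeries.coeff n' F := by
      intro n n' hn hn' hw
      have h1 := hrec n hn
      have h2 := hrec n' hn'
      rw [Finset.sum_range_succ'] at h1 h2
      have h3 : ∑ i ∈ Finset.range d,
            P.coeff (s + (i + 1)) * PowerSeries.coeff (n - (i + 1)) F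
          = ∑ i ∈ Finset.range d,
            P.coeff (s + (i + 1)) * PowerSeries.coeff (n' - (i + 1)) F := by
        apply Finset.sum_congr rfl
        intro i hi
        rw [Finset.mem_range] at hi
        rw [hw (i + 1) (by omega) (by omega)]
      rw [h3] at h1
      have h4 : P.coeff (s + 0) * PowerSeries.coeff (n - 0) F
          = P.coeff (s + 0) * PowerSeries.coeff (n' - 0) F := by
        rw [eq_neg_of_add_eq_zero_right h1, eq_neg_of_add_eq_zero_right h2]
      simp only [add_zero, Nat.sub_zero] at h4
      exact mul_left_cancel₀ hlam0 h4
    -- pigeonhole and conclusion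
    have hkey2 : ∀ m1 m2 : ℕ, m1 < m2 →
        (∀ i : Fin d, PowerSeries.coeff (N₁ + m1 + i) F
          = PowerSeries.coeff (N₁ + m2 + i) F) →
        ∃ g h : Polynomial C, CoeffsIn (Fq C p l) g ∧ CoeffsIn (Fq C p l) h ∧ h ≠ 0 ∧
          a * (h : PowerSeries C) = b * (g : PowerSeries C) := by
      intro m1 m2 hlt hwin
      have hper : ∀ j, PowerSeries.coeff (N₁ + m1 + j) F
          = PowerSeries.coeff (N₁ + m2 + j) F := by
        intro j
        induction j using Nat.strong_induction_on with
        | _ j ih =>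
          by_cases hj : j < d
          · exact hwin ⟨j, hj⟩
          · push_neg at hj
            apply hdet (N₁ + m1 + j) (N₁ + m2 + j) (by omega) (by omega)
            intro i hi1 hid
            rw [show N₁ + m1 + j - i = N₁ + m1 + (j - i) by omega,
              show N₁ + m2 + j - i = N₁ + m2 + (j - i) by omega]
            exact ih (j - i) (by omega)
      set E := F * (1 - PowerSeries.X ^ (m2 - m1)) with hEdef
      have hEc : ∀ j, PowerSeries.coeff j E = PowerSeries.coeff j F
          - (if m2 - m1 ≤ j then PowerSeries.coeff (j - (m2 - m1)) F else 0) := by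
        intro j
        rw [hEdef, mul_one_sub, map_sub, PowerSeries.coeff_mul_X_pow']
      have hE0 : ∀ j, N₁ + m2 ≤ j → PowerSeries.coeff j E = 0 := by
        intro j hj
        rw [hEc, if_pos (by omega)]
        have h7 := hper (j - (m2 - m1) - (N₁ + m1))
        rw [show N₁ + m1 + (j - (m2 - m1) - (N₁ + m1)) = j - (m2 - m1) by omega,
          show N₁ + m2 + (j - (m2 - m1) - (N₁ + m1)) = j by omega] at h7
        rw [← h7, sub_self]
      set g := PowerSeries.trunc (N₁ + m2) E with hgdef
      have hgc : (g : PowerSeries C) = E := by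
        apply PowerSeries.ext
        intro j
        rw [Polynomial.coeff_coe, hgdef, PowerSeries.coeff_trunc]
        split
        · rfl
        · exact (hE0 j (by omega)).symm
      have hgFq : CoeffsIn (Fq C p l) g := by
        intro i
        rw [hgdef, PowerSeries.coeff_trunc]
        split
        · rw [hEc]
          apply sub_mem (hc i)
          split
          · exact hc _
          · exact zero_mem _
        · exact zero_mem _
      refine ⟨g, Polynomial.X ^ m - Polynomial.X ^ (m + (m2 - m1)), hgFq, ?_, ?_, ?_⟩
      · intro i
        rw [Polynomial.coeff_sub, Polynomial.coeff_X_pow, Polynomial.coeff_X_pow]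
        apply sub_mem
        · split
          · exact one_mem _
          · exact zero_mem _
        · split
          · exact one_mem _
          · exact zero_mem _
      · intro hzero
        have h8 : (Polynomial.X ^ m - Polynomial.X ^ (m + (m2 - m1)) : Polynomial C).coeff m
            = 1 := by
          rw [Polynomial.coeff_sub, Polynomial.coeff_X_pow, Polynomial.coeff_X_pow,
            if_pos rfl, if_neg (by omega), sub_zero]
        rw [hzero, Polynomial.coeff_zero] at h8
        exact one_ne_zero h8.symm
      · have h9 : ((Polynomial.X ^ m - Polynomial.X ^ (m + (m2 - m1)) : Polynomial C) :
            PowerSeries C) = PowerSeries.X ^ m - PowerSeries.X ^ (m + (m2 - m1)) := by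
          push_cast
          ring
        rw [hgc, h9, hbdec, ← hFb, hEdef]
        ring
    obtain ⟨m1, m2, hmne, hmeq⟩ := Finite.exists_ne_map_eq_of_infinite
      (fun mm : ℕ => fun i : Fin d =>
        (⟨PowerSeries.coeff (N₁ + mm + i) F, hc _⟩ : Fq C p l))
    rcases hmne.lt_or_gt with h | h
    · exact hkey2 m1 m2 h fun i => Subtype.ext_iff.1 (congrFun hmeq i)
    · exact hkey2 m2 m1 h fun i => (Subtype.ext_iff.1 (congrFun hmeq i)).symm

end

end Carlitz
end
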